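/- arXiv:math/9805148 — 4 statements merged into one kernel-verified Lean document; each statement's English description precedes it below -/
import Mathlib

section
/- For every m ∈ ℕ and reals 0 < δ < ε < 1 there exists n ∈ ℕ such that for every finite set I with |I| > n there exists C ⊆ 2^I with 1 − ε − δ ≤ |C|·2^{−|I|} ≤ 1 − ε + δ, and such that for every f ∈ F^I with |dom f| ≤ m, | |(C)^f|·2^{−|I|} − (1 − ε)^{m⁰_f}·ε^{m¹_f} | < δ. -/
open Set Pointwise

/-- `(C)^f` for a partial two-valued function `f ∈ F^I`, represented by its domain `D`
together with a value function `v` (where `v s = true` codes `f s = 1`):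
the intersection over `s ∈ D` of `C + s` when `f s = 0` and of `(C + s)ᶜ` when
`f s = 1`.  For `D = ∅` this is all of `2^I`. -/
def csec {ι : Type} (C D : Set (ι → ZMod 2)) (v : (ι → ZMod 2) → Bool) :
    Set (ι → ZMod 2) :=
  ⋂ s ∈ D, if v s = true then (C + {s})ᶜ else C + {s}

/-- `m⁰_f`, the number of points of the domain where `f` takes the value `0`. -/
noncomputable def m0 {ι : Type} (D : Set (ι → ZMod 2)) (v : (ι → ZMod 2) → Bool) : ℕ :=
  (D ∩ {s | v s = false}).ncard

/-- `m¹_f`, the number of points of the domain where `f` takes the value `1`. -/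
noncomputable def m1 {ι : Type} (D : Set (ι → ZMod 2)) (v : (ι → ZMod 2) → Bool) : ℕ :=
  (D ∩ {s | v s = true}).ncard

namespace IndepAux

open Finset

open scoped Classical

variable {α : Type*} [Fintype α] [DecidableEq α]

noncomputable def wt (p : ℝ) (b : Bool) : ℝ := if b then p else 1 - p

noncomputable def W (p : ℝ) (c : α → Bool) : ℝ := ∏ a, wt p (c a)

lemma wt_nonneg {p : ℝ} (h0 : 0 ≤ p) (h1 : p ≤ 1) (b : Bool) : 0 ≤ wt p b := by
  cases b <;> simp [wt] <;> linarith

lemma W_nonneg {p : ℝ} (h0 : 0 ≤ p) (h1 : p ≤ 1) (c : α → Bool) : 0 ≤ W p c :=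
  Finset.prod_nonneg fun a _ => wt_nonneg h0 h1 _

lemma master (F : α → Bool → ℝ) :
    ∑ c : α → Bool, ∏ a, F a (c a) = ∏ a, (F a true + F a false) := by
  rw [← Fintype.prod_sum fun a b => F a b]
  exact Finset.prod_congr rfl fun a _ => by rw [Fintype.sum_bool]

lemma sum_W (p : ℝ) : ∑ c : α → Bool, W p c = 1 := by
  simp only [W]
  rw [master fun _ b => wt p b]
  have : ∀ b:Bool, wt p true + wt p false = 1 := by intro b; simp [wt]
  simp [wt]

lemma marginal (p : ℝ) (F : Finset α) (tgt : α → Bool) :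
    ∑ c : α → Bool, W p c * (if ∀ u ∈ F, c u = tgt u then (1:ℝ) else 0)
      = ∏ u ∈ F, wt p (tgt u) := by
  have h1 : ∀ c : α → Bool,
      W p c * (if ∀ u ∈ F, c u = tgt u then (1:ℝ) else 0)
        = ∏ a, (wt p (c a) * (if a ∈ F then (if c a = tgt a then (1:ℝ) else 0) else 1)) := by
    intro c
    rw [Finset.prod_mul_distrib]
    congr 1
    rw [Finset.prod_ite_mem univ F fun a => if c a = tgt a then (1:ℝ) else 0, Finset.univ_inter,
      Finset.prod_boole]
    simp
  simp only [h1]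
  rw [master fun a b => wt p b * (if a ∈ F then (if b = tgt a then (1:ℝ) else 0) else 1)]
  have h2 : ∀ a, (wt p true * (if a ∈ F then (if true = tgt a then (1:ℝ) else 0) else 1)
      + wt p false * (if a ∈ F then (if false = tgt a then (1:ℝ) else 0) else 1))
      = if a ∈ F then wt p (tgt a) else 1 := by
    intro a
    by_cases h : a ∈ F
    · cases htgt : tgt a <;> simp [h, htgt, wt]
    · simp only [if_neg h]
      simp [wt]
  simp only [h2]
  rw [Finset.prod_ite_mem, Finset.univ_inter]


section Group

variable {G : Type*} [AddCommGroup G] [Fintype G] [DecidableEq G]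

def okay (A B : Finset G) (x : G) (c : G → Bool) : Prop :=
  (∀ s ∈ A, c (x + s) = true) ∧ (∀ s ∈ B, c (x + s) = false)

noncomputable def Xcnt (A B : Finset G) (c : G → Bool) : ℕ :=
  (univ.filter fun x => okay A B x c).card

lemma Xcnt_le (A B : Finset G) (c : G → Bool) : Xcnt A B c ≤ Fintype.card G := by
  classical
  exact le_trans (Finset.card_filter_le _ _) (le_of_eq (Finset.card_univ))

lemma okay_iff (A B : Finset G) (hAB : Disjoint A B) (x : G) (c : G → Bool) :
    okay A B x c ↔ ∀ u ∈ (A ∪ B).image (x + ·), c u = decide (u - x ∈ A) := by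
  constructor
  · rintro ⟨hA, hB⟩ u hu
    obtain ⟨s, hs, rfl⟩ := Finset.mem_image.1 hu
    rw [add_sub_cancel_left]
    rcases Finset.mem_union.1 hs with h | h
    · simp [hA s h, h]
    · have hna : s ∉ A := (Finset.disjoint_right.1 hAB) h
      simp [hB s h, hna]
  · intro h
    constructor
    · intro s hs
      have h2 := h (x + s) (Finset.mem_image_of_mem _ (Finset.mem_union_left _ hs))
      rw [add_sub_cancel_left] at h2
      simpa [hs] using h2
    · intro s hs
      have h2 := h (x + s) (Finset.mem_image_of_mem _ (Finset.mem_union_right _ hs))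
      rw [add_sub_cancel_left] at h2
      simpa [(Finset.disjoint_right.1 hAB) hs] using h2

lemma sum_W_okay (p : ℝ) {A B : Finset G} (hAB : Disjoint A B) (x : G) :
    ∑ c : G → Bool, W p c * (if okay A B x c then (1:ℝ) else 0)
      = p ^ A.card * (1 - p) ^ B.card := by
  have h1 : ∀ c : G → Bool, (if okay A B x c then (1:ℝ) else 0)
      = (if ∀ u ∈ (A ∪ B).image (x + ·), c u = decide (u - x ∈ A) then (1:ℝ) else 0) := by
    intro c
    simp only [okay_iff A B hAB x c]
  simp only [h1]
  rw [marginal]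
  rw [Finset.prod_image (by intro a _ b _ hab; exact add_left_cancel hab)]
  have h2 : ∀ s ∈ A ∪ B, wt p (decide (x + s - x ∈ A)) = if s ∈ A then p else 1 - p := by
    intro s _
    rw [add_sub_cancel_left]
    by_cases h : s ∈ A <;> simp [wt, h]
  rw [Finset.prod_congr rfl h2, Finset.prod_union hAB]
  congr 1
  · rw [Finset.prod_congr rfl fun s hs => if_pos hs, Finset.prod_const]
  · rw [Finset.prod_congr rfl fun s hs => if_neg ((Finset.disjoint_right.1 hAB) hs),
      Finset.prod_const]

lemma sum_W_Xcnt (p : ℝ) {A B : Finset G} (hAB : Disjoint A B) :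
    ∑ c : G → Bool, W p c * (Xcnt A B c : ℝ)
      = (Fintype.card G : ℝ) * (p ^ A.card * (1 - p) ^ B.card) := by
  have h : ∀ c : G → Bool, (Xcnt A B c : ℝ) = ∑ x : G, (if okay A B x c then (1:ℝ) else 0) := by
    intro c
    rw [Xcnt, Finset.card_filter]
    push_cast
    rfl
  simp only [h, Finset.mul_sum]
  rw [Finset.sum_comm]
  have h3 : ∀ x : G, ∑ c : G → Bool, W p c * (if okay A B x c then (1:ℝ) else 0)
      = p ^ A.card * (1 - p) ^ B.card := fun x => sum_W_okay p hAB x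
  rw [Finset.sum_congr rfl fun x _ => h3 x, Finset.sum_const, Finset.card_univ,
    nsmul_eq_mul]

end Group

section Hoeffding

variable {η : Type*} [Fintype η] [DecidableEq η] {κ : Type*} [Fintype κ] [DecidableEq κ]

noncomputable def E1 (p : ℝ) (Y : (η → Bool) → ℝ) : ℝ := ∑ d : η → Bool, W p d * Y d

lemma E1_nonneg {p : ℝ} (h0 : 0 ≤ p) (h1 : p ≤ 1) {Y : (η → Bool) → ℝ}
    (hY0 : ∀ d, 0 ≤ Y d) : 0 ≤ E1 p Y :=
  Finset.sum_nonneg fun d _ => mul_nonneg (W_nonneg h0 h1 d) (hY0 d)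

lemma E1_le {p : ℝ} (h0 : 0 ≤ p) (h1 : p ≤ 1) {Y : (η → Bool) → ℝ} {b : ℝ}
    (hYb : ∀ d, Y d ≤ b) : E1 p Y ≤ b := by
  calc E1 p Y ≤ ∑ d : η → Bool, W p d * b :=
        Finset.sum_le_sum fun d _ => mul_le_mul_of_nonneg_left (hYb d) (W_nonneg h0 h1 d)
    _ = b := by rw [← Finset.sum_mul, sum_W, one_mul]

lemma mgf_block (p : ℝ) (h0 : 0 ≤ p) (h1 : p ≤ 1) (Y : (η → Bool) → ℝ) (b l : ℝ)
    (hb : 0 < b) (hY0 : ∀ d, 0 ≤ Y d) (hYb : ∀ d, Y d ≤ b) :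
    ∑ d : η → Bool, W p d * Real.exp (l * (Y d - E1 p Y)) ≤ Real.exp (l ^ 2 * b ^ 2 / 2) := by
  have hbne : b ≠ 0 := ne_of_gt hb
  have hμ0 : 0 ≤ E1 p Y := E1_nonneg h0 h1 hY0
  have hμb : E1 p Y ≤ b := E1_le h0 h1 hYb
  have hpt : ∀ d : η → Bool, Real.exp (l * (Y d - E1 p Y))
      ≤ Real.cosh (l * b) + ((Y d - E1 p Y) / b) * Real.sinh (l * b) := by
    intro d
    set z := Y d - E1 p Y with hz
    have hz1 : -b ≤ z := by have := hY0 d; simp only [hz]; linarith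
    have hz2 : z ≤ b := by have := hYb d; simp only [hz]; linarith
    have key := convexOn_exp.2 (Set.mem_univ (-(l * b))) (Set.mem_univ (l * b))
      (div_nonneg (by linarith) (by linarith) : (0:ℝ) ≤ (b - z) / (2 * b))
      (div_nonneg (by linarith) (by linarith) : (0:ℝ) ≤ (b + z) / (2 * b))
      (by field_simp; ring)
    simp only [smul_eq_mul] at key
    have harg : (b - z) / (2 * b) * (-(l * b)) + (b + z) / (2 * b) * (l * b) = l * z := by
      field_simp
      ring
    rw [harg] at key
    calc Real.exp (l * z) ≤ (b - z) / (2 * b) * Real.exp (-(l * b))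
          + (b + z) / (2 * b) * Real.exp (l * b) := key
      _ = Real.cosh (l * b) + (z / b) * Real.sinh (l * b) := by
          rw [Real.cosh_eq, Real.sinh_eq]
          field_simp
          ring
  calc ∑ d : η → Bool, W p d * Real.exp (l * (Y d - E1 p Y))
      ≤ ∑ d : η → Bool, W p d * (Real.cosh (l * b) + ((Y d - E1 p Y) / b) * Real.sinh (l * b)) :=
        Finset.sum_le_sum fun d _ => mul_le_mul_of_nonneg_left (hpt d) (W_nonneg h0 h1 d)
    _ = Real.cosh (l * b) * (∑ d : η → Bool, W p d)
        + (Real.sinh (l * b) / b) * (∑ d : η → Bool, W p d * Y d)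
        - (Real.sinh (l * b) / b) * (E1 p Y * (∑ d : η → Bool, W p d)) := by
        have hterm : ∀ d : η → Bool,
            W p d * (Real.cosh (l * b) + ((Y d - E1 p Y) / b) * Real.sinh (l * b))
            = Real.cosh (l * b) * W p d + (Real.sinh (l * b) / b) * (W p d * Y d)
              - (Real.sinh (l * b) / b) * (E1 p Y * W p d) := by
          intro d; field_simp; ring
        rw [Finset.sum_congr rfl fun d _ => hterm d, Finset.sum_sub_distrib,
          Finset.sum_add_distrib, ← Finset.mul_sum, ← Finset.mul_sum, ← Finset.mul_sum,
          ← Finset.mul_sum]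
    _ = Real.cosh (l * b) := by rw [sum_W, ← E1]; ring
    _ ≤ Real.exp ((l * b) ^ 2 / 2) := Real.cosh_le_exp_half_sq (l * b)
    _ = Real.exp (l ^ 2 * b ^ 2 / 2) := by rw [mul_pow]

lemma mgf_sum (p : ℝ) (h0 : 0 ≤ p) (h1 : p ≤ 1) (Y : (η → Bool) → ℝ) (b l : ℝ)
    (hb : 0 < b) (hY0 : ∀ d, 0 ≤ Y d) (hYb : ∀ d, Y d ≤ b) :
    ∑ d : κ → η → Bool, (∏ k, W p (d k))
        * Real.exp (l * ((∑ k, Y (d k)) - (Fintype.card κ : ℝ) * E1 p Y))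
      ≤ Real.exp ((Fintype.card κ : ℝ) * (l ^ 2 * b ^ 2 / 2)) := by
  have key : ∀ d : κ → η → Bool,
      (∏ k, W p (d k)) * Real.exp (l * ((∑ k, Y (d k)) - (Fintype.card κ : ℝ) * E1 p Y))
        = ∏ k, (W p (d k) * Real.exp (l * (Y (d k) - E1 p Y))) := by
    intro d
    rw [Finset.prod_mul_distrib]
    congr 1
    rw [← Real.exp_sum]
    congr 1
    rw [← Finset.mul_sum, Finset.sum_sub_distrib, Finset.sum_const, Finset.card_univ,
      nsmul_eq_mul]
  rw [Finset.sum_congr rfl fun d _ => key d,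
    ← Fintype.prod_sum fun (k : κ) (d' : η → Bool) => W p d' * Real.exp (l * (Y d' - E1 p Y))]
  have hblock : ∀ k : κ, (∑ d' : η → Bool, W p d' * Real.exp (l * (Y d' - E1 p Y)))
      ≤ Real.exp (l ^ 2 * b ^ 2 / 2) := fun _ => mgf_block p h0 h1 Y b l hb hY0 hYb
  calc (∏ _k : κ, ∑ d' : η → Bool, W p d' * Real.exp (l * (Y d' - E1 p Y)))
      ≤ ∏ _k : κ, Real.exp (l ^ 2 * b ^ 2 / 2) := by
        apply Finset.prod_le_prod
        · intro k _
          exact Finset.sum_nonneg fun d' _ =>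
            mul_nonneg (W_nonneg h0 h1 d') (Real.exp_nonneg _)
        · intro k _
          exact hblock k
    _ = Real.exp ((Fintype.card κ : ℝ) * (l ^ 2 * b ^ 2 / 2)) := by
        rw [Finset.prod_const, Finset.card_univ, ← Real.exp_nat_mul]

lemma chernoff_one (p : ℝ) (h0 : 0 ≤ p) (h1 : p ≤ 1) (Y : (η → Bool) → ℝ) (b l t : ℝ)
    (hl : 0 ≤ l) (hb : 0 < b) (hY0 : ∀ d, 0 ≤ Y d) (hYb : ∀ d, Y d ≤ b) :
    ∑ d : κ → η → Bool,
        (if t ≤ (∑ k, Y (d k)) - (Fintype.card κ : ℝ) * E1 p Y then (∏ k, W p (d k)) else 0)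
      ≤ Real.exp (-(l * t) + (Fintype.card κ : ℝ) * (l ^ 2 * b ^ 2 / 2)) := by
  have hW0 : ∀ d : κ → η → Bool, 0 ≤ ∏ k, W p (d k) :=
    fun d => Finset.prod_nonneg fun k _ => W_nonneg h0 h1 (d k)
  have hpt : ∀ d : κ → η → Bool,
      (if t ≤ (∑ k, Y (d k)) - (Fintype.card κ : ℝ) * E1 p Y then (∏ k, W p (d k)) else 0)
        ≤ (∏ k, W p (d k))
          * Real.exp (l * ((∑ k, Y (d k)) - (Fintype.card κ : ℝ) * E1 p Y)) * Real.exp (-(l*t)) := by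
    intro d
    by_cases h : t ≤ (∑ k, Y (d k)) - (Fintype.card κ : ℝ) * E1 p Y
    · rw [if_pos h, mul_assoc, ← Real.exp_add]
      nth_rewrite 1 [← mul_one (∏ k, W p (d k))]
      apply mul_le_mul_of_nonneg_left _ (hW0 d)
      rw [← Real.exp_zero]
      apply Real.exp_le_exp.2
      have : l * ((∑ k, Y (d k)) - (Fintype.card κ : ℝ) * E1 p Y) + -(l * t)
          = l * (((∑ k, Y (d k)) - (Fintype.card κ : ℝ) * E1 p Y) - t) := by ring
      rw [this]
      exact mul_nonneg hl (by linarith)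
    · rw [if_neg h]
      exact mul_nonneg (mul_nonneg (hW0 d) (Real.exp_nonneg _)) (Real.exp_nonneg _)
  calc ∑ d : κ → η → Bool,
        (if t ≤ (∑ k, Y (d k)) - (Fintype.card κ : ℝ) * E1 p Y then (∏ k, W p (d k)) else 0)
      ≤ ∑ d : κ → η → Bool, (∏ k, W p (d k))
          * Real.exp (l * ((∑ k, Y (d k)) - (Fintype.card κ : ℝ) * E1 p Y))
          * Real.exp (-(l*t)) := Finset.sum_le_sum fun d _ => hpt d
    _ = (∑ d : κ → η → Bool, (∏ k, W p (d k))
          * Real.exp (l * ((∑ k, Y (d k)) - (Fintype.card κ : ℝ) * E1 p Y)))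
          * Real.exp (-(l*t)) := by rw [Finset.sum_mul]
    _ ≤ Real.exp ((Fintype.card κ : ℝ) * (l ^ 2 * b ^ 2 / 2)) * Real.exp (-(l*t)) :=
        mul_le_mul_of_nonneg_right (mgf_sum p h0 h1 Y b l hb hY0 hYb) (Real.exp_nonneg _)
    _ = Real.exp (-(l * t) + (Fintype.card κ : ℝ) * (l ^ 2 * b ^ 2 / 2)) := by
        rw [← Real.exp_add, add_comm]

lemma hoeffding (p : ℝ) (h0 : 0 ≤ p) (h1 : p ≤ 1) (Y : (η → Bool) → ℝ) (b t : ℝ)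
    (hb : 0 < b) (ht : 0 < t) (hY0 : ∀ d, 0 ≤ Y d) (hYb : ∀ d, Y d ≤ b) :
    ∑ d : κ → η → Bool,
        (if t ≤ |(∑ k, Y (d k)) - (Fintype.card κ : ℝ) * E1 p Y| then (∏ k, W p (d k)) else 0)
      ≤ 2 * Real.exp (-(t ^ 2) / (2 * (Fintype.card κ : ℝ) * b ^ 2)) := by
  have hW0 : ∀ d : κ → η → Bool, 0 ≤ ∏ k, W p (d k) :=
    fun d => Finset.prod_nonneg fun k _ => W_nonneg h0 h1 (d k)
  rcases isEmpty_or_nonempty κ with hκ | hκ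
  · have hc0 : (Fintype.card κ : ℝ) = 0 := by
      rw [Fintype.card_eq_zero]; norm_num
    have hev : ∀ d : κ → η → Bool,
        ¬ (t ≤ |(∑ k, Y (d k)) - (Fintype.card κ : ℝ) * E1 p Y|) := by
      intro d
      have h1 : (∑ k, Y (d k)) = 0 := by simp
      rw [h1, hc0]
      simpa using ht
    rw [Finset.sum_congr rfl fun d _ => if_neg (hev d), Finset.sum_const, smul_zero]
    positivity
  · have hT : (0:ℝ) < (Fintype.card κ : ℝ) := by
      have := Fintype.card_pos (α := κ)
      positivity
    set T : ℝ := (Fintype.card κ : ℝ) with hTdef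
    set l : ℝ := t / (T * b ^ 2) with hldef
    have hl : 0 ≤ l := by positivity
    have hexp : -(l * t) + T * (l ^ 2 * b ^ 2 / 2) = -(t ^ 2) / (2 * T * b ^ 2) := by
      rw [hldef]
      field_simp
      ring
    -- lower-tail auxiliary function
    set Y' : (η → Bool) → ℝ := fun d' => b - Y d' with hY'def
    have hE1' : E1 p Y' = b - E1 p Y := by
      rw [E1, E1]
      have : ∀ d' : η → Bool, W p d' * (b - Y d') = W p d' * b - W p d' * Y d' :=
        fun d' => by ring
      rw [Finset.sum_congr rfl fun d' _ => this d', Finset.sum_sub_distrib, ← Finset.sum_mul,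
        sum_W, one_mul]
    have htrans : ∀ d : κ → η → Bool,
        (∑ k, Y' (d k)) - T * E1 p Y' = -((∑ k, Y (d k)) - T * E1 p Y) := by
      intro d
      rw [hE1']
      have : ∑ k, Y' (d k) = (∑ k : κ, b) - ∑ k, Y (d k) := by
        rw [← Finset.sum_sub_distrib]
      rw [this, Finset.sum_const, Finset.card_univ, nsmul_eq_mul]
      ring
    have hsplit : ∀ d : κ → η → Bool,
        (if t ≤ |(∑ k, Y (d k)) - T * E1 p Y| then (∏ k, W p (d k)) else 0)
          ≤ (if t ≤ (∑ k, Y (d k)) - T * E1 p Y then (∏ k, W p (d k)) else 0)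
            + (if t ≤ (∑ k, Y' (d k)) - T * E1 p Y' then (∏ k, W p (d k)) else 0) := by
      intro d
      rw [htrans d]
      by_cases h : t ≤ |(∑ k, Y (d k)) - T * E1 p Y|
      · rw [if_pos h]
        rcases le_abs.1 h with h1 | h1
        · rw [if_pos h1]
          have h2 : (0:ℝ) ≤ (if t ≤ -((∑ k, Y (d k)) - T * E1 p Y) then (∏ k, W p (d k)) else 0) := by
            split
            · exact hW0 d
            · exact le_rfl
          linarith
        · rw [if_pos h1]
          have h2 : (0:ℝ) ≤ (if t ≤ (∑ k, Y (d k)) - T * E1 p Y then (∏ k, W p (d k)) else 0) := by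
            split
            · exact hW0 d
            · exact le_rfl
          linarith
      · rw [if_neg h]
        have h1 : (0:ℝ) ≤ (if t ≤ (∑ k, Y (d k)) - T * E1 p Y then (∏ k, W p (d k)) else 0) := by
          split
          · exact hW0 d
          · exact le_rfl
        have h2 : (0:ℝ) ≤ (if t ≤ -((∑ k, Y (d k)) - T * E1 p Y) then (∏ k, W p (d k)) else 0) := by
          split
          · exact hW0 d
          · exact le_rfl
        linarith
    calc ∑ d : κ → η → Bool,
          (if t ≤ |(∑ k, Y (d k)) - T * E1 p Y| then (∏ k, W p (d k)) else 0)
        ≤ ∑ d : κ → η → Bool,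
            ((if t ≤ (∑ k, Y (d k)) - T * E1 p Y then (∏ k, W p (d k)) else 0)
              + (if t ≤ (∑ k, Y' (d k)) - T * E1 p Y' then (∏ k, W p (d k)) else 0)) :=
          Finset.sum_le_sum fun d _ => hsplit d
      _ = (∑ d : κ → η → Bool,
            (if t ≤ (∑ k, Y (d k)) - T * E1 p Y then (∏ k, W p (d k)) else 0))
          + (∑ d : κ → η → Bool,
            (if t ≤ (∑ k, Y' (d k)) - T * E1 p Y' then (∏ k, W p (d k)) else 0)) :=
          Finset.sum_add_distrib
      _ ≤ Real.exp (-(l * t) + T * (l ^ 2 * b ^ 2 / 2))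
          + Real.exp (-(l * t) + T * (l ^ 2 * b ^ 2 / 2)) := by
          apply add_le_add
          · exact chernoff_one p h0 h1 Y b l t hl hb hY0 hYb
          · exact chernoff_one p h0 h1 Y' b l t hl hb
              (fun d' => by simp only [hY'def]; have := hYb d'; linarith)
              (fun d' => by simp only [hY'def]; have := hY0 d'; linarith)
      _ = 2 * Real.exp (-(t ^ 2) / (2 * T * b ^ 2)) := by rw [hexp]; ring

end Hoeffding

section Transfer

variable {V : Type*} [AddCommGroup V] [Module (ZMod 2) V] [Fintype V] [DecidableEq V]

lemma card_span_le (S : Finset V) :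
    Fintype.card (Submodule.span (ZMod 2) (S : Set V)) ≤ 2 ^ S.card := by
  classical
  have hsurj : Function.Surjective (fun f : S → ZMod 2 =>
      (⟨∑ s ∈ S.attach, f s • (s : V),
        Submodule.sum_mem _ fun s _ =>
          Submodule.smul_mem _ _ (Submodule.subset_span (Finset.mem_coe.2 s.2))⟩ :
        Submodule.span (ZMod 2) (S : Set V))) := by
    rintro ⟨a, ha⟩
    obtain ⟨f, -, hf⟩ := Submodule.mem_span_finset.1 ha
    refine ⟨fun s => f (s : V), ?_⟩
    apply Subtype.ext
    show ∑ s ∈ S.attach, f ↑s • (s : V) = a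
    exact (Finset.sum_attach S fun i => f i • i).trans hf
  calc Fintype.card (Submodule.span (ZMod 2) (S : Set V))
      ≤ Fintype.card (S → ZMod 2) := Fintype.card_le_of_surjective _ hsurj
    _ = 2 ^ S.card := by rw [Fintype.card_fun, ZMod.card, Fintype.card_coe]

set_option maxHeartbeats 1000000 in
lemma tail_V (p : ℝ) (h0 : 0 ≤ p) (h1 : p ≤ 1)
    (A B : Finset V) (hAB : Disjoint A B) (t : ℝ) (ht : 0 < t) (b2 : ℝ)
    (hb2 : (2:ℝ) ^ ((A ∪ B).card) ≤ b2) :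
    ∑ c : V → Bool,
        (if t ≤ |(Xcnt A B c : ℝ)
            - (Fintype.card V : ℝ) * (p ^ A.card * (1 - p) ^ B.card)| then W p c else 0)
      ≤ 2 * Real.exp (-(t ^ 2) / (2 * (Fintype.card V : ℝ) * b2)) := by
  classical
  haveI : Fact (Nat.Prime 2) := ⟨Nat.prime_two⟩
  set H : Submodule (ZMod 2) V := Submodule.span (ZMod 2) ((A ∪ B : Finset V) : Set V) with hHdef
  have hAH : ∀ s ∈ A, s ∈ H := fun s hs =>
    Submodule.subset_span (Finset.mem_coe.2 (Finset.mem_union_left _ hs))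
  have hBH : ∀ s ∈ B, s ∈ H := fun s hs =>
    Submodule.subset_span (Finset.mem_coe.2 (Finset.mem_union_right _ hs))
  obtain ⟨q, hq⟩ := Submodule.exists_isCompl H
  set φe : (↥H × ↥q) ≃ V := (Submodule.prodEquivOfIsCompl H q hq).toEquiv with hφdef
  have hφ : ∀ z : ↥H × ↥q, φe z = (z.1 : V) + (z.2 : V) := fun z =>
    Submodule.coe_prodEquivOfIsCompl' H q hq z
  have hcard : Fintype.card ↥H * Fintype.card ↥q = Fintype.card V := by
    rw [← Fintype.card_prod]
    exact Fintype.card_congr φe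
  have hH1 : 0 < Fintype.card ↥H := Fintype.card_pos
  have hq1 : 0 < Fintype.card ↥q := Fintype.card_pos
  have hV1 : 0 < Fintype.card V := Fintype.card_pos
  have hHb2 : (Fintype.card ↥H : ℝ) ≤ b2 := by
    refine le_trans ?_ hb2
    exact_mod_cast card_span_le (A ∪ B)
  -- pull the finsets into H
  set A' : Finset ↥H := univ.filter (fun h : ↥H => (h : V) ∈ A) with hA'def
  set B' : Finset ↥H := univ.filter (fun h : ↥H => (h : V) ∈ B) with hB'def
  have hA'B' : Disjoint A' B' := by
    rw [Finset.disjoint_left]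
    intro a ha hb
    exact (Finset.disjoint_left.1 hAB) (Finset.mem_filter.1 ha).2 (Finset.mem_filter.1 hb).2
  have hA'card : A'.card = A.card := by
    apply Finset.card_bij (fun (h : ↥H) _ => (h : V))
    · intro a ha; exact (Finset.mem_filter.1 ha).2
    · intro a ha b hb hab; exact Subtype.ext hab
    · intro s hs; exact ⟨⟨s, hAH s hs⟩, Finset.mem_filter.2 ⟨Finset.mem_univ _, hs⟩, rfl⟩
  have hB'card : B'.card = B.card := by
    apply Finset.card_bij (fun (h : ↥H) _ => (h : V))
    · intro a ha; exact (Finset.mem_filter.1 ha).2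
    · intro a ha b hb hab; exact Subtype.ext hab
    · intro s hs; exact ⟨⟨s, hBH s hs⟩, Finset.mem_filter.2 ⟨Finset.mem_univ _, hs⟩, rfl⟩
  -- the equivalence of coin spaces
  set Ee : (↥q → ↥H → Bool) ≃ (V → Bool) :=
    { toFun := fun d v => d (φe.symm v).2 (φe.symm v).1
      invFun := fun c k h => c (φe (h, k))
      left_inv := by intro d; funext k h; simp
      right_inv := by intro c; funext v; simp } with hEedef
  have hEeφ : ∀ (d : ↥q → ↥H → Bool) (h : ↥H) (k : ↥q), Ee d (φe (h, k)) = d k h := by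
    intro d h k; simp [hEedef]
  have hWtrans : ∀ d : ↥q → ↥H → Bool, W p (Ee d) = ∏ k, W p (d k) := by
    intro d
    rw [W, ← Fintype.prod_equiv φe (fun z => wt p (Ee d (φe z))) (fun v => wt p (Ee d v))
      (fun z => rfl), Fintype.prod_prod_type, Finset.prod_comm]
    have hinner : ∀ k : ↥q, (∏ h : ↥H, wt p (Ee d (φe (h, k)))) = W p (d k) := by
      intro k
      rw [W]
      exact Finset.prod_congr rfl fun h _ => by rw [hEeφ]
    exact Finset.prod_congr rfl fun k _ => hinner k
  have hφadd : ∀ (h s : ↥H) (k : ↥q), φe (h, k) + (s : V) = φe (h + s, k) := by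
    intro h s k
    rw [hφ, hφ]
    push_cast
    abel
  have hokay : ∀ (d : ↥q → ↥H → Bool) (h : ↥H) (k : ↥q),
      okay A B (φe (h, k)) (Ee d) ↔ okay A' B' h (d k) := by
    intro d h k
    constructor
    · rintro ⟨hA1, hB1⟩
      constructor
      · intro s hs
        have := hA1 (s : V) (Finset.mem_filter.1 hs).2
        rwa [hφadd h s k, hEeφ] at this
      · intro s hs
        have := hB1 (s : V) (Finset.mem_filter.1 hs).2
        rwa [hφadd h s k, hEeφ] at this
    · rintro ⟨hA1, hB1⟩
      constructor
      · intro s hs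
        have h2 := hA1 ⟨s, hAH s hs⟩ (Finset.mem_filter.2 ⟨Finset.mem_univ _, hs⟩)
        rw [show φe (h, k) + s = φe (h + ⟨s, hAH s hs⟩, k) from hφadd h ⟨s, hAH s hs⟩ k, hEeφ]
        exact h2
      · intro s hs
        have h2 := hB1 ⟨s, hBH s hs⟩ (Finset.mem_filter.2 ⟨Finset.mem_univ _, hs⟩)
        rw [show φe (h, k) + s = φe (h + ⟨s, hBH s hs⟩, k) from hφadd h ⟨s, hBH s hs⟩ k, hEeφ]
        exact h2
  have hXtransN : ∀ d : ↥q → ↥H → Bool, Xcnt A B (Ee d) = ∑ k, Xcnt A' B' (d k) := by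
    intro d
    rw [Xcnt, Finset.card_filter,
      ← Fintype.sum_equiv φe (fun z => if okay A B (φe z) (Ee d) then 1 else 0)
        (fun v => if okay A B v (Ee d) then 1 else 0) (fun z => rfl),
      Fintype.sum_prod_type, Finset.sum_comm]
    apply Finset.sum_congr rfl
    intro k _
    rw [Xcnt, Finset.card_filter]
    exact Finset.sum_congr rfl fun h _ => by rw [if_congr (hokay d h k) rfl rfl]
  set Y : (↥H → Bool) → ℝ := fun d' => (Xcnt A' B' d' : ℝ) with hYdef
  have hE1 : E1 p Y = (Fintype.card ↥H : ℝ) * (p ^ A.card * (1 - p) ^ B.card) := by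
    rw [E1]
    have := sum_W_Xcnt p hA'B'
    rw [hA'card, hB'card] at this
    exact this
  have hmean : (Fintype.card V : ℝ) * (p ^ A.card * (1 - p) ^ B.card)
      = (Fintype.card ↥q : ℝ) * E1 p Y := by
    rw [hE1, ← hcard]
    push_cast
    ring
  have hXtrans : ∀ d : ↥q → ↥H → Bool, (Xcnt A B (Ee d) : ℝ) = ∑ k, Y (d k) := by
    intro d
    rw [hXtransN d]
    push_cast
    rfl
  rw [← Equiv.sum_comp Ee (fun c => if t ≤ |(Xcnt A B c : ℝ)
      - (Fintype.card V : ℝ) * (p ^ A.card * (1 - p) ^ B.card)| then W p c else 0)]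
  have hsummand : ∀ d : ↥q → ↥H → Bool,
      (if t ≤ |(Xcnt A B (Ee d) : ℝ)
          - (Fintype.card V : ℝ) * (p ^ A.card * (1 - p) ^ B.card)| then W p (Ee d) else 0)
        = (if t ≤ |(∑ k, Y (d k)) - (Fintype.card ↥q : ℝ) * E1 p Y|
            then (∏ k, W p (d k)) else 0) := by
    intro d
    rw [hWtrans d, hXtrans d, hmean]
  rw [Finset.sum_congr rfl fun d _ => hsummand d]
  have hfinal := hoeffding (κ := ↥q) p h0 h1 Y (Fintype.card ↥H : ℝ) t
    (by exact_mod_cast hH1) ht (fun d' => by simp only [hYdef]; exact Nat.cast_nonneg _)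
    (fun d' => by simp only [hYdef]; exact_mod_cast Xcnt_le A' B' d')
  refine le_trans hfinal ?_
  have hc1 : (0:ℝ) < (Fintype.card ↥q : ℝ) := by exact_mod_cast hq1
  have hc2 : (0:ℝ) < (Fintype.card ↥H : ℝ) := by exact_mod_cast hH1
  have hD1 : (0:ℝ) < 2 * (Fintype.card ↥q : ℝ) * (Fintype.card ↥H : ℝ) ^ 2 :=
    mul_pos (mul_pos two_pos hc1) (pow_pos hc2 2)
  have hD2 : 2 * (Fintype.card ↥q : ℝ) * (Fintype.card ↥H : ℝ) ^ 2
      ≤ 2 * (Fintype.card V : ℝ) * b2 := by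
    have h1 : 2 * (Fintype.card ↥q : ℝ) * (Fintype.card ↥H : ℝ) ^ 2
        = 2 * (Fintype.card V : ℝ) * (Fintype.card ↥H : ℝ) := by
      rw [← hcard]; push_cast; ring
    rw [h1]
    have h2 : (0:ℝ) ≤ 2 * (Fintype.card V : ℝ) := by
      have : (0:ℝ) < (Fintype.card V : ℝ) := by exact_mod_cast hV1
      linarith
    exact mul_le_mul_of_nonneg_left hHb2 h2
  have hle : -(t ^ 2) / (2 * (Fintype.card ↥q : ℝ) * (Fintype.card ↥H : ℝ) ^ 2)
      ≤ -(t ^ 2) / (2 * (Fintype.card V : ℝ) * b2) := by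
    rw [neg_div, neg_div, neg_le_neg_iff]
    exact div_le_div_of_nonneg_left (sq_nonneg t) hD1 hD2
  have := Real.exp_le_exp.2 hle
  linarith

lemma exists_good (p δ : ℝ) (h0 : 0 ≤ p) (h1 : p ≤ 1) (hδ : 0 < δ) (M : ℕ)
    (hsmall : (((M:ℝ) + 1) * (Fintype.card V : ℝ) ^ M) ^ 2
        * (2 * Real.exp (-(δ ^ 2) * (Fintype.card V : ℝ) / (2 * 2 ^ (2 * M)))) < 1) :
    ∃ c : V → Bool, ∀ A B : Finset V, Disjoint A B → A.card ≤ M → B.card ≤ M →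
      |(Xcnt A B c : ℝ) - (Fintype.card V : ℝ) * (p ^ A.card * (1 - p) ^ B.card)|
        < δ * (Fintype.card V : ℝ) := by
  classical
  by_contra hcon
  push_neg at hcon
  have hNc : (0:ℝ) < (Fintype.card V : ℝ) := by
    have := Fintype.card_pos (α := V); exact_mod_cast this
  set Nc : ℝ := (Fintype.card V : ℝ) with hNcdef
  set t : ℝ := δ * Nc with htdef
  have ht : 0 < t := mul_pos hδ hNc
  set P : Finset (Finset V) := univ.filter (fun A : Finset V => A.card ≤ M) with hPdef
  set Pd : Finset (Finset V × Finset V) :=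
    (P ×ˢ P).filter (fun AB => Disjoint AB.1 AB.2) with hPddef
  set f : Finset V × Finset V → (V → Bool) → ℝ := fun AB c =>
    if t ≤ |(Xcnt AB.1 AB.2 c : ℝ) - Nc * (p ^ AB.1.card * (1 - p) ^ AB.2.card)|
    then W p c else 0 with hfdef
  have hstep : ∀ c : V → Bool, W p c ≤ ∑ AB ∈ Pd, f AB c := by
    intro c
    obtain ⟨A, B, hd, hA, hB, hbad⟩ := hcon c
    have hmem : (A, B) ∈ Pd := by
      rw [hPddef]
      refine Finset.mem_filter.2 ⟨Finset.mem_product.2 ⟨?_, ?_⟩, hd⟩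
      · exact Finset.mem_filter.2 ⟨Finset.mem_univ _, hA⟩
      · exact Finset.mem_filter.2 ⟨Finset.mem_univ _, hB⟩
    have heval : f (A, B) c = W p c := if_pos hbad
    calc W p c = f (A, B) c := heval.symm
      _ ≤ ∑ AB ∈ Pd, f AB c := by
          apply Finset.single_le_sum (f := fun AB => f AB c) _ hmem
          intro AB _
          rw [hfdef]
          dsimp only
          split
          · exact W_nonneg h0 h1 c
          · exact le_rfl
  have hsum1 : (1:ℝ) ≤ ∑ AB ∈ Pd, ∑ c : V → Bool, f AB c := by
    calc (1:ℝ) = ∑ c : V → Bool, W p c := (sum_W p).symm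
      _ ≤ ∑ c : V → Bool, ∑ AB ∈ Pd, f AB c := Finset.sum_le_sum fun c _ => hstep c
      _ = ∑ AB ∈ Pd, ∑ c : V → Bool, f AB c := Finset.sum_comm
  set bd : ℝ := 2 * Real.exp (-(δ ^ 2) * Nc / (2 * 2 ^ (2 * M))) with hbddef
  have hbd0 : 0 ≤ bd := by positivity
  have hple : ∀ AB ∈ Pd, ∑ c : V → Bool, f AB c ≤ bd := by
    intro AB hAB
    obtain ⟨hpr, hdisj⟩ := Finset.mem_filter.1 hAB
    obtain ⟨hA, hB⟩ := Finset.mem_product.1 hpr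
    have hAcard : AB.1.card ≤ M := (Finset.mem_filter.1 hA).2
    have hBcard : AB.2.card ≤ M := (Finset.mem_filter.1 hB).2
    have hcub : (2:ℝ) ^ ((AB.1 ∪ AB.2).card) ≤ 2 ^ (2 * M) := by
      apply pow_le_pow_right₀ one_le_two
      calc (AB.1 ∪ AB.2).card ≤ AB.1.card + AB.2.card := Finset.card_union_le _ _
        _ ≤ 2 * M := by omega
    have htv := tail_V p h0 h1 AB.1 AB.2 hdisj t ht ((2:ℝ) ^ (2 * M)) hcub
    have hexp : -(t ^ 2) / (2 * Nc * 2 ^ (2 * M)) = -(δ ^ 2) * Nc / (2 * 2 ^ (2 * M)) := by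
      rw [htdef]
      field_simp
    rw [hexp] at htv
    exact htv
  have hPcard : (P.card : ℝ) ≤ ((M:ℝ) + 1) * Nc ^ M := by
    have h1 : P ⊆ (Finset.range (M + 1)).biUnion (fun k => Finset.powersetCard k univ) := by
      intro A hA
      simp only [Finset.mem_biUnion, Finset.mem_range]
      exact ⟨A.card, Nat.lt_succ_of_le (Finset.mem_filter.1 hA).2,
        Finset.mem_powersetCard_univ.2 rfl⟩
    have h2 : P.card ≤ ∑ k ∈ Finset.range (M + 1),
        (Finset.powersetCard k (univ : Finset V)).card :=
      le_trans (Finset.card_le_card h1) (Finset.card_biUnion_le)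
    have h3 : ∀ k ∈ Finset.range (M + 1),
        (Finset.powersetCard k (univ : Finset V)).card ≤ Fintype.card V ^ M := by
      intro k hk
      rw [Finset.card_powersetCard, Finset.card_univ]
      calc (Fintype.card V).choose k ≤ Fintype.card V ^ k := Nat.choose_le_pow _ _
        _ ≤ Fintype.card V ^ M := Nat.pow_le_pow_right Fintype.card_pos (Nat.lt_succ_iff.1 (Finset.mem_range.1 hk))
    have h4 : P.card ≤ (M + 1) * Fintype.card V ^ M := by
      calc P.card ≤ ∑ k ∈ Finset.range (M + 1),
            (Finset.powersetCard k (univ : Finset V)).card := h2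
        _ ≤ ∑ _k ∈ Finset.range (M + 1), Fintype.card V ^ M := Finset.sum_le_sum h3
        _ = (M + 1) * Fintype.card V ^ M := by rw [Finset.sum_const, Finset.card_range,
            smul_eq_mul]
    calc (P.card : ℝ) ≤ ((M + 1) * Fintype.card V ^ M : ℕ) := by exact_mod_cast h4
      _ = ((M:ℝ) + 1) * Nc ^ M := by push_cast; rw [hNcdef]
  have hPdcard : (Pd.card : ℝ) ≤ (((M:ℝ) + 1) * Nc ^ M) ^ 2 := by
    have h1 : Pd.card ≤ P.card * P.card := by
      calc Pd.card ≤ (P ×ˢ P).card := Finset.card_filter_le _ _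
        _ = P.card * P.card := Finset.card_product _ _
    have h2 : (0:ℝ) ≤ (P.card : ℝ) := Nat.cast_nonneg _
    calc (Pd.card : ℝ) ≤ (P.card : ℝ) * (P.card : ℝ) := by exact_mod_cast h1
      _ ≤ (((M:ℝ) + 1) * Nc ^ M) * (((M:ℝ) + 1) * Nc ^ M) := by
          apply mul_le_mul hPcard hPcard h2
          positivity
      _ = (((M:ℝ) + 1) * Nc ^ M) ^ 2 := by ring
  have hfin : (1:ℝ) ≤ (((M:ℝ) + 1) * Nc ^ M) ^ 2 * bd := by
    calc (1:ℝ) ≤ ∑ AB ∈ Pd, ∑ c : V → Bool, f AB c := hsum1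
      _ ≤ ∑ _AB ∈ Pd, bd := Finset.sum_le_sum hple
      _ = Pd.card * bd := by rw [Finset.sum_const, nsmul_eq_mul]
      _ ≤ (((M:ℝ) + 1) * Nc ^ M) ^ 2 * bd := mul_le_mul_of_nonneg_right hPdcard hbd0
  linarith

end Transfer

lemma exists_R (M : ℕ) (δ : ℝ) (hδ : 0 < δ) :
    ∃ R : ℝ, ∀ y : ℝ, R ≤ y →
      (((M:ℝ) + 1) * y ^ M) ^ 2 * (2 * Real.exp (-(δ ^ 2) * y / (2 * 2 ^ (2 * M)))) < 1 := by
  set c : ℝ := δ ^ 2 / (2 * 2 ^ (2 * M)) with hcdef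
  have hc : 0 < c := by positivity
  have h1 : Filter.Tendsto (fun x : ℝ => x ^ (2 * M) * Real.exp (-x)) Filter.atTop (nhds 0) :=
    Real.tendsto_pow_mul_exp_neg_atTop_nhds_zero (2 * M)
  have h2 : Filter.Tendsto (fun y : ℝ => c * y) Filter.atTop Filter.atTop :=
    Filter.Tendsto.const_mul_atTop hc Filter.tendsto_id
  have h3 := h1.comp h2
  have h4 : Filter.Tendsto (fun y : ℝ =>
      (2 * ((M:ℝ) + 1) ^ 2 / c ^ (2 * M)) * ((c * y) ^ (2 * M) * Real.exp (-(c * y))))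
      Filter.atTop (nhds 0) := by
    have h5 := h3.const_mul (2 * ((M:ℝ) + 1) ^ 2 / c ^ (2 * M))
    simpa using h5
  have h5 := h4.eventually_lt_const (by norm_num : (0:ℝ) < 1)
  rw [Filter.eventually_atTop] at h5
  obtain ⟨R, hR⟩ := h5
  refine ⟨R, fun y hy => ?_⟩
  have h6 := hR y hy
  have heq : (2 * ((M:ℝ) + 1) ^ 2 / c ^ (2 * M)) * ((c * y) ^ (2 * M) * Real.exp (-(c * y)))
      = (((M:ℝ) + 1) * y ^ M) ^ 2 * (2 * Real.exp (-(δ ^ 2) * y / (2 * 2 ^ (2 * M)))) := by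
    have hexp : -(c * y) = -(δ ^ 2) * y / (2 * 2 ^ (2 * M)) := by rw [hcdef]; ring
    rw [← hexp, mul_pow c y (2 * M)]
    have hcne : c ^ (2 * M) ≠ 0 := by positivity
    field_simp
    ring
  rw [← heq]
  exact h6

end IndepAux

/-- Theorem 3.1 of the paper. -/
theorem exists_independent_translates_F (m : ℕ) (δ ε : ℝ)
    (hδ0 : 0 < δ) (hδε : δ < ε) (hε1 : ε < 1) :
    ∃ n : ℕ, ∀ (ι : Type) [Fintype ι], n < Fintype.card ι →
      ∃ C : Set (ι → ZMod 2),
        1 - ε - δ ≤ (C.ncard : ℝ) / 2 ^ Fintype.card ι ∧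
        (C.ncard : ℝ) / 2 ^ Fintype.card ι ≤ 1 - ε + δ ∧
        ∀ (D : Set (ι → ZMod 2)) (v : (ι → ZMod 2) → Bool), D.ncard ≤ m →
          |((csec C D v).ncard : ℝ) / 2 ^ Fintype.card ι
            - (1 - ε) ^ m0 D v * ε ^ m1 D v| < δ := by
  classical
  set p : ℝ := 1 - ε with hpdef
  have hε0 : 0 < ε := lt_trans hδ0 hδε
  have h0 : 0 ≤ p := by rw [hpdef]; linarith
  have h1 : p ≤ 1 := by rw [hpdef]; linarith
  have h1p : 1 - p = ε := by rw [hpdef]; ring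
  obtain ⟨R, hR⟩ := IndepAux.exists_R (max m 1) δ hδ0
  refine ⟨⌈R⌉₊, ?_⟩
  intro ι _ hn
  set N := Fintype.card ι with hNdef
  have hpow : (0:ℝ) < 2 ^ N := by positivity
  have hcardVN : Fintype.card (ι → ZMod 2) = 2 ^ N := by
    rw [Fintype.card_fun, ZMod.card]
  have hcardV : (Fintype.card (ι → ZMod 2) : ℝ) = 2 ^ N := by
    rw [hcardVN]; push_cast; ring
  have hsmall : ((((max m 1 : ℕ):ℝ) + 1)
        * (Fintype.card (ι → ZMod 2) : ℝ) ^ (max m 1)) ^ 2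
      * (2 * Real.exp (-(δ ^ 2) * (Fintype.card (ι → ZMod 2) : ℝ)
          / (2 * 2 ^ (2 * max m 1)))) < 1 := by
    rw [hcardV]
    apply hR
    calc R ≤ (⌈R⌉₊ : ℝ) := Nat.le_ceil R
      _ ≤ (N : ℝ) := by exact_mod_cast le_of_lt hn
      _ ≤ 2 ^ N := by
          have h2 := (Nat.lt_two_pow_self (n := N)).le
          have h3 : (N:ℝ) ≤ ((2 ^ N : ℕ) : ℝ) := by exact_mod_cast h2
          calc (N:ℝ) ≤ ((2 ^ N : ℕ) : ℝ) := h3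
            _ = 2 ^ N := by push_cast; ring
  obtain ⟨c, hc⟩ := IndepAux.exists_good p δ h0 h1 hδ0 (max m 1) hsmall
  set CF : Finset (ι → ZMod 2) := Finset.univ.filter (fun x => c x = true) with hCFdef
  have haddself : ∀ y : ι → ZMod 2, y + y = 0 := by
    intro y; funext i
    have h2 : ∀ z : ZMod 2, z + z = 0 := by decide
    exact h2 (y i)
  have hmemadd : ∀ (S : Set (ι → ZMod 2)) (s x : ι → ZMod 2), x ∈ S + {s} ↔ x + s ∈ S := by
    intro S s x
    rw [Set.add_singleton]
    constructor
    · rintro ⟨a, ha, rfl⟩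
      show a + s + s ∈ S
      rw [add_assoc, haddself s, add_zero]; exact ha
    · intro h
      refine ⟨x + s, h, ?_⟩
      show x + s + s = x
      rw [add_assoc, haddself s, add_zero]
  have hmemCF : ∀ x : ι → ZMod 2, x ∈ (↑CF : Set (ι → ZMod 2)) ↔ c x = true := by
    intro x; simp [hCFdef]
  -- density of C itself
  have hXCeq : IndepAux.Xcnt ({0} : Finset (ι → ZMod 2)) ∅ c = CF.card := by
    rw [IndepAux.Xcnt]
    apply congrArg Finset.card
    apply Finset.filter_congr
    intro x _
    constructor
    · rintro ⟨hA, _⟩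
      have h2 := hA 0 (Finset.mem_singleton_self 0)
      rwa [add_zero x] at h2
    · intro h
      refine ⟨fun s hs => ?_, fun s hs => absurd hs (Finset.notMem_empty s)⟩
      rw [Finset.mem_singleton.1 hs, add_zero]
      exact h
  have hXC := hc ({0} : Finset (ι → ZMod 2)) ∅ (Finset.disjoint_empty_right _)
    (by rw [Finset.card_singleton]; exact le_max_right m 1) (by simp)
  rw [hXCeq, hcardV, Finset.card_singleton, Finset.card_empty, pow_one, pow_zero, mul_one] at hXC
  have habs := abs_lt.1 hXC
  refine ⟨(↑CF : Set (ι → ZMod 2)), ?_, ?_, ?_⟩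
  · rw [Set.ncard_coe_finset, le_div_iff₀ hpow]
    nlinarith [habs.1]
  · rw [Set.ncard_coe_finset, div_le_iff₀ hpow]
    nlinarith [habs.2]
  · intro D v hD
    have hSAfin : (D ∩ {s | v s = false}).Finite := Set.toFinite _
    have hSBfin : (D ∩ {s | v s = true}).Finite := Set.toFinite _
    have hDfin : D.Finite := Set.toFinite _
    set AF : Finset (ι → ZMod 2) := hSAfin.toFinset with hAFdef
    set BF : Finset (ι → ZMod 2) := hSBfin.toFinset with hBFdef
    have hm0 : m0 D v = AF.card := by
      rw [m0, Set.ncard_eq_toFinset_card _ hSAfin]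
    have hm1 : m1 D v = BF.card := by
      rw [m1, Set.ncard_eq_toFinset_card _ hSBfin]
    have hDcard : hDfin.toFinset.card = D.ncard := (Set.ncard_eq_toFinset_card _ hDfin).symm
    have hAsub : AF ⊆ hDfin.toFinset := by
      intro s hs
      rw [hAFdef, Set.Finite.mem_toFinset] at hs
      rw [Set.Finite.mem_toFinset]
      exact hs.1
    have hBsub : BF ⊆ hDfin.toFinset := by
      intro s hs
      rw [hBFdef, Set.Finite.mem_toFinset] at hs
      rw [Set.Finite.mem_toFinset]
      exact hs.1
    have hAcard : AF.card ≤ max m 1 :=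
      le_trans (Finset.card_le_card hAsub)
        (by rw [hDcard]; exact le_trans hD (le_max_left m 1))
    have hBcard : BF.card ≤ max m 1 :=
      le_trans (Finset.card_le_card hBsub)
        (by rw [hDcard]; exact le_trans hD (le_max_left m 1))
    have hdisjAB : Disjoint AF BF := by
      rw [Finset.disjoint_left]
      intro a ha hb
      rw [hAFdef, Set.Finite.mem_toFinset] at ha
      rw [hBFdef, Set.Finite.mem_toFinset] at hb
      have h2 := ha.2
      have h3 := hb.2
      rw [Set.mem_setOf_eq] at h2 h3
      rw [h2] at h3
      exact absurd h3 (by simp)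
    have hcsec : csec (↑CF) D v = {x | IndepAux.okay AF BF x c} := by
      ext x
      rw [csec, Set.mem_iInter₂]
      simp only [Set.mem_setOf_eq]
      constructor
      · intro h
        constructor
        · intro s hs
          rw [hAFdef, Set.Finite.mem_toFinset] at hs
          have h2 := h s hs.1
          have hvs : v s = false := hs.2
          rw [if_neg (by rw [hvs]; simp)] at h2
          rw [hmemadd] at h2
          exact (hmemCF (x + s)).1 h2
        · intro s hs
          rw [hBFdef, Set.Finite.mem_toFinset] at hs
          have h2 := h s hs.1
          have hvs : v s = true := hs.2
          rw [if_pos (by rw [hvs])] at h2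
          rw [Set.mem_compl_iff, hmemadd] at h2
          have h3 : ¬ (c (x + s) = true) := fun hcx => h2 ((hmemCF (x + s)).2 hcx)
          cases hcx : c (x + s)
          · rfl
          · exact absurd hcx h3
      · rintro ⟨hA, hB⟩ s hs
        by_cases hv : v s = true
        · rw [if_pos hv]
          have h2 := hB s (by
            rw [hBFdef, Set.Finite.mem_toFinset]
            exact ⟨hs, hv⟩)
          rw [Set.mem_compl_iff, hmemadd]
          intro h3
          rw [(hmemCF (x + s)).1 h3] at h2
          exact absurd h2 (by simp)
        · rw [if_neg hv]
          have hvf : v s = false := by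
            cases hcx : v s
            · rfl
            · exact absurd hcx hv
          have h2 := hA s (by
            rw [hAFdef, Set.Finite.mem_toFinset]
            exact ⟨hs, hvf⟩)
          rw [hmemadd]
          exact (hmemCF (x + s)).2 h2
    have hncard : (csec (↑CF) D v).ncard = IndepAux.Xcnt AF BF c := by
      rw [hcsec, IndepAux.Xcnt]
      have h2 : {x | IndepAux.okay AF BF x c}
          = ↑(Finset.univ.filter fun x => IndepAux.okay AF BF x c) := by
        ext x; simp
      rw [h2, Set.ncard_coe_finset]
    have hmain := hc AF BF hdisjAB hAcard hBcard
    rw [hcardV] at hmain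
    rw [hm0, hm1, hncard, ← h1p]
    have hgoal : (IndepAux.Xcnt AF BF c : ℝ) / 2 ^ N - p ^ AF.card * (1 - p) ^ BF.card
        = ((IndepAux.Xcnt AF BF c : ℝ)
            - 2 ^ N * (p ^ AF.card * (1 - p) ^ BF.card)) / 2 ^ N := by
      field_simp
    rw [hgoal, abs_div, abs_of_pos hpow, div_lt_iff₀ hpow]
    linarith [hmain]
end

section
/- Let I be a finite set, C ⊆ 2^I, 0 < ε < 1, δ > 0, and m ∈ ℕ. If for every X ⊆ 2^I with |X| ≤ m we have | |⋂_{s ∈ X} (C + s)|·2^{−|I|} − (1 − ε)^{|X|} | < δ, then for every f ∈ F^I with |dom f| ≤ m we have | |(C)^f|·2^{−|I|} − (1 − ε)^{m⁰_f}·ε^{m¹_f} | < 2^m·δ. -/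
open Set Pointwise

lemma csec_aux
    (ι : Type) [Fintype ι] (C : Set (ι → ZMod 2)) (ε δ : ℝ) (m : ℕ)
    (hδ0 : 0 < δ)
    (h : ∀ X : Set (ι → ZMod 2), X.ncard ≤ m →
      |((⋂ s ∈ X, (C + {s})).ncard : ℝ) / 2 ^ Fintype.card ι
        - (1 - ε) ^ X.ncard| < δ) :
    ∀ (b : ℕ) (D : Set (ι → ZMod 2)) (v : (ι → ZMod 2) → Bool), D.ncard ≤ m →
      m1 D v = b →
      |((csec C D v).ncard : ℝ) / 2 ^ Fintype.card ι
        - (1 - ε) ^ m0 D v * ε ^ m1 D v| < 2 ^ b * δ := by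
  intro b
  induction b with
  | zero =>
    intro D v hD hb
    have hempty : D ∩ {s | v s = true} = ∅ :=
      (Set.ncard_eq_zero (Set.toFinite _)).mp hb
    have hval : ∀ s ∈ D, v s = false := by
      intro s hs
      by_contra hvs
      have : s ∈ D ∩ {s | v s = true} := ⟨hs, by simpa using hvs⟩
      simp [hempty] at this
    have hcs : csec C D v = ⋂ s ∈ D, (C + {s}) := by
      unfold csec
      apply Set.iInter₂_congr
      intro s hs
      simp [hval s hs]
    have hm0 : m0 D v = D.ncard := by
      unfold m0
      congr 1
      apply Set.inter_eq_left.mpr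
      intro s hs
      exact hval s hs
    rw [hcs, hm0, hb, pow_zero, mul_one, pow_zero, one_mul]
    exact h D hD
  | succ b ih =>
    intro D v hD hb
    unfold m1 at hb
    have hne : (D ∩ {s | v s = true}).Nonempty :=
      Set.nonempty_of_ncard_ne_zero (by omega)
    obtain ⟨s₀, hs₀D, hvs₀⟩ := hne
    simp only [Set.mem_setOf_eq] at hvs₀
    have hmem : s₀ ∈ D ∩ {s | v s = true} := ⟨hs₀D, hvs₀⟩
    set D' : Set (ι → ZMod 2) := D \ {s₀} with hD'def
    set v' : (ι → ZMod 2) → Bool := fun s => if s = s₀ then false else v s with hv'def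
    have hD'card : D'.ncard ≤ m := le_trans (Set.ncard_diff_singleton_le D s₀) hD
    -- m0/m1 computations
    have hm1D' : m1 D' v = b := by
      unfold m1
      have : D' ∩ {s | v s = true} = (D ∩ {s | v s = true}) \ {s₀} := by
        ext s; simp [hD'def]; tauto
      rw [this, Set.ncard_diff_singleton_of_mem hmem]
      omega
    have hm0D' : m0 D' v = m0 D v := by
      unfold m0
      congr 1
      ext s
      simp only [hD'def, Set.mem_inter_iff, Set.mem_diff, Set.mem_singleton_iff,
        Set.mem_setOf_eq]
      constructor
      · rintro ⟨⟨h1, _⟩, h2⟩; exact ⟨h1, h2⟩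
      · rintro ⟨h1, h2⟩
        refine ⟨⟨h1, ?_⟩, h2⟩
        rintro rfl; rw [hvs₀] at h2; exact Bool.noConfusion h2
    have hm1Dv' : m1 D v' = b := by
      unfold m1
      have : D ∩ {s | v' s = true} = (D ∩ {s | v s = true}) \ {s₀} := by
        ext s
        simp only [hv'def, Set.mem_inter_iff, Set.mem_setOf_eq, Set.mem_diff,
          Set.mem_singleton_iff]
        by_cases hs : s = s₀ <;> simp [hs]
      rw [this, Set.ncard_diff_singleton_of_mem hmem]
      omega
    have hm0Dv' : m0 D v' = m0 D v + 1 := by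
      unfold m0
      have : D ∩ {s | v' s = false} = insert s₀ (D ∩ {s | v s = false}) := by
        ext s
        simp only [hv'def, Set.mem_inter_iff, Set.mem_setOf_eq, Set.mem_insert_iff]
        by_cases hs : s = s₀ <;> simp [hs, hs₀D]
      rw [this, Set.ncard_insert_of_notMem ?_ (Set.toFinite _)]
      rintro ⟨-, h2⟩
      simp only [Set.mem_setOf_eq] at h2
      rw [hvs₀] at h2; exact Bool.noConfusion h2
    -- set identities
    have hvD' : csec C D' v' = csec C D' v := by
      unfold csec
      apply Set.iInter₂_congr
      intro s hs
      have : s ≠ s₀ := hs.2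
      simp [hv'def, this]
    have hinsert : D = insert s₀ D' := by
      rw [hD'def, Set.insert_diff_singleton, Set.insert_eq_self.mpr hs₀D]
    have hcsDv : csec C D v = csec C D' v \ (C + {s₀}) := by
      unfold csec
      rw [hinsert, Set.biInter_insert]
      simp [hvs₀, Set.diff_eq, Set.inter_comm]
    have hcsDv' : csec C D v' = csec C D' v ∩ (C + {s₀}) := by
      rw [← hvD']
      unfold csec
      rw [hinsert, Set.biInter_insert]
      have hv's₀ : v' s₀ = false := by simp [hv'def]
      simp only [hv's₀]
      simp [Set.inter_comm]
    have hcard : ((csec C D' v).ncard : ℝ)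
        = ((csec C D v').ncard : ℝ) + ((csec C D v).ncard : ℝ) := by
      rw [hcsDv, hcsDv']
      rw [← Nat.cast_add]
      norm_cast
      exact (Set.ncard_inter_add_ncard_diff_eq_ncard _ _ (Set.toFinite _)).symm
    have h1 := ih D' v hD'card hm1D'
    have h2 := ih D v' hD hm1Dv'
    rw [hm1D', hm0D'] at h1
    rw [hm1Dv', hm0Dv'] at h2
    have key : ((csec C D v).ncard : ℝ) / 2 ^ Fintype.card ι
        - (1 - ε) ^ m0 D v * ε ^ m1 D v
        = (((csec C D' v).ncard : ℝ) / 2 ^ Fintype.card ι - (1 - ε) ^ m0 D v * ε ^ b)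
          - (((csec C D v').ncard : ℝ) / 2 ^ Fintype.card ι
            - (1 - ε) ^ (m0 D v + 1) * ε ^ b) := by
      unfold m1
      rw [hcard, hb]
      ring
    rw [key]
    calc |_ - _| ≤ |((csec C D' v).ncard : ℝ) / 2 ^ Fintype.card ι
            - (1 - ε) ^ m0 D v * ε ^ b|
          + |((csec C D v').ncard : ℝ) / 2 ^ Fintype.card ι
            - (1 - ε) ^ (m0 D v + 1) * ε ^ b| := abs_sub _ _
      _ < 2 ^ b * δ + 2 ^ b * δ := add_lt_add h1 h2
      _ = 2 ^ (b + 1) * δ := by ring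

/-- The approximate-independence condition on intersections of translates implies the
corresponding condition for all `(C)^f` with `|dom f| ≤ m`, with error `2^m·δ`. -/
theorem csec_estimate_of_inter_estimate
    (ι : Type) [Fintype ι] (C : Set (ι → ZMod 2)) (ε δ : ℝ) (m : ℕ)
    (hε0 : 0 < ε) (hε1 : ε < 1) (hδ0 : 0 < δ)
    (h : ∀ X : Set (ι → ZMod 2), X.ncard ≤ m →
      |((⋂ s ∈ X, (C + {s})).ncard : ℝ) / 2 ^ Fintype.card ι
        - (1 - ε) ^ X.ncard| < δ) :
    ∀ (D : Set (ι → ZMod 2)) (v : (ι → ZMod 2) → Bool), D.ncard ≤ m →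
      |((csec C D v).ncard : ℝ) / 2 ^ Fintype.card ι
        - (1 - ε) ^ m0 D v * ε ^ m1 D v| < 2 ^ m * δ := by
  intro D v hD
  have hm1 : m1 D v ≤ m :=
    le_trans (Set.ncard_le_ncard Set.inter_subset_left (Set.toFinite _)) hD
  have := csec_aux ι C ε δ m hδ0 h (m1 D v) D v hD rfl
  refine lt_of_lt_of_le this ?_
  have : (2 : ℝ) ^ m1 D v ≤ 2 ^ m := by
    apply pow_le_pow_right₀ (by norm_num) hm1
  nlinarith
end

section
/- For every n ∈ ℕ, p ∈ [0,1] and real δ > 0, ℙ_{n,p}({ω : |Sₙ(ω) − n·p| ≥ n·δ}) ≤ 2·exp(−n·δ²/4). -/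
open MeasureTheory Set
open scoped ENNReal

/-- The product of `n` Bernoulli(`p`) measures on `Fin n → Bool`: each coordinate is
independently `true` with probability `p`. -/
noncomputable def bernoulliPi (n : ℕ) (p : ℝ) (hp : ENNReal.ofReal p ≤ 1) :
    Measure (Fin n → Bool) :=
  Measure.pi fun _ => (PMF.bernoulli (Real.toNNReal p) (ENNReal.coe_le_one_iff.mp hp)).toMeasure

/-- The number of successes in `ω`. -/
def successes {n : ℕ} (ω : Fin n → Bool) : ℕ :=
  (Finset.univ.filter fun i => ω i = true).card


open ProbabilityTheory


lemma bern_pi_inter (n : ℕ) (p : ℝ) (hp : ENNReal.ofReal p ≤ 1)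
    (S : Finset (Fin n)) (s : Fin n → Set Bool) :
    Measure.pi (fun _ : Fin n => (PMF.bernoulli (Real.toNNReal p) (ENNReal.coe_le_one_iff.mp hp)).toMeasure)
        (⋂ i ∈ S, (fun ω : Fin n → Bool => ω i) ⁻¹' s i)
      = ∏ i ∈ S, (PMF.bernoulli (Real.toNNReal p) (ENNReal.coe_le_one_iff.mp hp)).toMeasure (s i) := by
  classical
  set ν := (PMF.bernoulli (Real.toNNReal p) (ENNReal.coe_le_one_iff.mp hp)).toMeasure
  have h1 : (⋂ i ∈ S, (fun ω : Fin n → Bool => ω i) ⁻¹' s i)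
      = Set.pi Set.univ (fun i => if i ∈ S then s i else Set.univ) := by
    ext ω
    simp only [Set.mem_iInter, Set.mem_preimage, Set.mem_pi, Set.mem_univ, true_implies]
    constructor
    · intro h i
      by_cases hi : i ∈ S
      · simpa [hi] using h i hi
      · simp [hi]
    · intro h i hi
      have := h i
      simpa [hi] using this
  rw [h1, Measure.pi_pi]
  rw [← Finset.prod_filter_mul_prod_filter_not Finset.univ (· ∈ S)]
  have h2 : ∀ i ∈ Finset.univ.filter (· ∈ S), ν (if i ∈ S then s i else Set.univ) = ν (s i) := by
    intro i hi
    simp only [Finset.mem_filter] at hi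
    simp [hi.2]
  have h3 : ∀ i ∈ Finset.univ.filter (¬ · ∈ S), ν (if i ∈ S then s i else Set.univ) = 1 := by
    intro i hi
    simp only [Finset.mem_filter] at hi
    rw [if_neg hi.2]
    exact measure_univ
  rw [Finset.prod_congr rfl h2, Finset.prod_congr rfl h3, Finset.prod_const_one, mul_one]
  congr 1
  ext i
  simp

lemma bern_pi_indep (n : ℕ) (p : ℝ) (hp : ENNReal.ofReal p ≤ 1) :
    iIndepFun
      (fun i (ω : Fin n → Bool) => if ω i then (1:ℝ) else 0)
      (Measure.pi (fun _ : Fin n => (PMF.bernoulli (Real.toNNReal p) (ENNReal.coe_le_one_iff.mp hp)).toMeasure)) := by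
  classical
  rw [iIndepFun_iff]
  intro S f' hf'
  have key : ∀ i ∈ S, ∃ s : Set Bool,
      f' i = (fun ω : Fin n → Bool => ω i) ⁻¹' s := by
    intro i hi
    obtain ⟨t, -, ht⟩ := hf' i hi
    exact ⟨(fun b : Bool => if b then (1:ℝ) else 0) ⁻¹' t, ht ▸ rfl⟩
  choose! s hs using key
  have h1 : (⋂ i ∈ S, f' i) = ⋂ i ∈ S, (fun ω : Fin n → Bool => ω i) ⁻¹' s i := by
    apply Set.iInter₂_congr hs
  rw [h1, bern_pi_inter n p hp]
  refine Finset.prod_congr rfl fun i hi => ?_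
  rw [hs i hi]
  have := bern_pi_inter n p hp {i} s
  simpa using this.symm

lemma bern_pi_meas_true (n : ℕ) (p : ℝ) (hp : ENNReal.ofReal p ≤ 1) (i : Fin n) :
    Measure.pi (fun _ : Fin n => (PMF.bernoulli (Real.toNNReal p) (ENNReal.coe_le_one_iff.mp hp)).toMeasure)
      {ω : Fin n → Bool | ω i = true} = ENNReal.ofReal p := by
  have := bern_pi_inter n p hp {i} (fun _ => {true})
  simp only [Finset.mem_singleton, Set.iInter_iInter_eq_left, Finset.prod_singleton] at this
  have h2 : (PMF.bernoulli (Real.toNNReal p) (ENNReal.coe_le_one_iff.mp hp)).toMeasure {true} = ENNReal.ofReal p := by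
    rw [PMF.toMeasure_apply_singleton _ _ (measurableSet_singleton _)]
    simp [PMF.bernoulli_apply]; rfl
  have h3 : {ω : Fin n → Bool | ω i = true} = (fun ω : Fin n → Bool => ω i) ⁻¹' {true} := by
    ext ω; simp
  rw [h3]
  rw [this, h2]

lemma bern_pi_mgf (n : ℕ) (p : ℝ) (hp0 : 0 ≤ p) (hp : ENNReal.ofReal p ≤ 1) (i : Fin n) (t : ℝ) :
    mgf (fun ω : Fin n → Bool => if ω i then (1:ℝ) else 0)
      (Measure.pi (fun _ : Fin n => (PMF.bernoulli (Real.toNNReal p) (ENNReal.coe_le_one_iff.mp hp)).toMeasure)) t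
      = 1 - p + p * Real.exp t := by
  set μ := Measure.pi (fun _ : Fin n => (PMF.bernoulli (Real.toNNReal p) (ENNReal.coe_le_one_iff.mp hp)).toMeasure)
  have hpt : ∀ ω : Fin n → Bool,
      Real.exp (t * (if ω i then (1:ℝ) else 0))
        = 1 + (Real.exp t - 1) * (if ω i then (1:ℝ) else 0) := by
    intro ω; by_cases h : ω i <;> simp [h]
  have hInd : (fun ω : Fin n → Bool => if ω i then (1:ℝ) else 0)
      = Set.indicator {ω : Fin n → Bool | ω i = true} (1 : (Fin n → Bool) → ℝ) := by
    ext ω; by_cases h : ω i <;> simp [Set.indicator, h]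
  have hX : ∫ ω, (if ω i then (1:ℝ) else 0) ∂μ = p := by
    rw [hInd, integral_indicator_one MeasurableSet.of_discrete, measureReal_def, bern_pi_meas_true n p hp i,
      ENNReal.toReal_ofReal hp0]
  rw [mgf]
  simp only [hpt]
  rw [integral_add (integrable_const 1) (Integrable.of_finite.const_mul _), integral_const,
    integral_const_mul, hX]
  have : IsProbabilityMeasure μ := inferInstance
  simp [measure_univ]
  ring

lemma one_sub_add_exp_le (p t : ℝ) (hp0 : 0 ≤ p) (hp1 : p ≤ 1) (ht : |t| ≤ 1) :
    1 - p + p * Real.exp t ≤ Real.exp (p * (t + t ^ 2)) := by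
  have h1 : Real.exp t ≤ 1 + t + t ^ 2 := by
    have := Real.exp_bound ht (by norm_num : 0 < 2)
    have h2 : (∑ i ∈ Finset.range 2, t ^ i / (Nat.factorial i : ℝ)) = 1 + t := by
      simp [Finset.sum_range_succ, Nat.factorial]
    rw [h2] at this
    have h3 : |t| ^ 2 * ((Nat.succ 2 : ℝ) / ((Nat.factorial 2 : ℝ) * (2:ℕ))) = 3 / 4 * t ^ 2 := by
      rw [sq_abs]; norm_num [Nat.factorial, Nat.succ_eq_add_one]; ring
    rw [h3] at this
    have := abs_le.mp this
    nlinarith [sq_nonneg t]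
  have h4 : 1 - p + p * Real.exp t ≤ 1 + p * (t + t ^ 2) := by nlinarith
  exact h4.trans (by linarith [Real.add_one_le_exp (p * (t + t ^ 2))])

lemma bern_pi_mgf_sum (n : ℕ) (p : ℝ) (hp0 : 0 ≤ p) (hp : ENNReal.ofReal p ≤ 1) (t : ℝ) :
    mgf (fun ω : Fin n → Bool => (successes ω : ℝ))
      (Measure.pi (fun _ : Fin n => (PMF.bernoulli (Real.toNNReal p) (ENNReal.coe_le_one_iff.mp hp)).toMeasure)) t
      = (1 - p + p * Real.exp t) ^ n := by
  have hfun : (fun ω : Fin n → Bool => (successes ω : ℝ))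
      = ∑ i : Fin n, (fun ω : Fin n → Bool => if ω i then (1:ℝ) else 0) := by
    funext ω
    simp [successes, Finset.sum_apply, Finset.sum_boole]
  rw [hfun, iIndepFun.mgf_sum (bern_pi_indep n p hp) (fun i => Measurable.of_discrete)]
  simp [bern_pi_mgf n p hp0 hp, Finset.prod_const, Finset.card_univ]

lemma bern_exponent_le (n : ℕ) (p δ t : ℝ) (hp0 : 0 ≤ p) (hp1 : p ≤ 1) (ht : |t| ≤ 1)
    (ε C : ℝ) (hkey : -t * ε + n * (p * (t + t ^ 2)) ≤ C) (h0 : 0 ≤ 1 - p + p * Real.exp t) :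
    Real.exp (-t * ε) * (1 - p + p * Real.exp t) ^ n ≤ Real.exp C := by
  calc Real.exp (-t * ε) * (1 - p + p * Real.exp t) ^ n
      ≤ Real.exp (-t * ε) * Real.exp (p * (t + t ^ 2)) ^ n := by
        apply mul_le_mul_of_nonneg_left _ (Real.exp_pos _).le
        exact pow_le_pow_left₀ h0 (one_sub_add_exp_le p t hp0 hp1 ht) n
    _ = Real.exp (-t * ε + n * (p * (t + t ^ 2))) := by
        rw [← Real.exp_nat_mul, ← Real.exp_add]
    _ ≤ Real.exp C := Real.exp_le_exp.mpr hkey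

lemma bern_upper_tail (n : ℕ) (p : ℝ) (hp0 : 0 ≤ p) (hp1 : p ≤ 1)
    (hp : ENNReal.ofReal p ≤ 1) (δ : ℝ) (hδ : 0 < δ) (hδ2 : δ ≤ 2) :
    (Measure.pi (fun _ : Fin n => (PMF.bernoulli (Real.toNNReal p) (ENNReal.coe_le_one_iff.mp hp)).toMeasure)
        {ω : Fin n → Bool | (n : ℝ) * (p + δ) ≤ (successes ω : ℝ)}).toReal
      ≤ Real.exp (-(n * δ ^ 2 / 4)) := by
  set t := δ / 2 with hts
  have ht : |t| ≤ 1 := by rw [abs_of_pos (by positivity)]; linarith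
  have h0 : 0 ≤ 1 - p + p * Real.exp t := by nlinarith [Real.exp_pos t]
  have h := measure_ge_le_exp_mul_mgf (μ := Measure.pi
      (fun _ : Fin n => (PMF.bernoulli (Real.toNNReal p) (ENNReal.coe_le_one_iff.mp hp)).toMeasure))
      (X := fun ω : Fin n → Bool => (successes ω : ℝ)) (t := t) ((n : ℝ) * (p + δ))
      (by positivity) Integrable.of_finite
  rw [bern_pi_mgf_sum n p hp0 hp t] at h
  refine h.trans (bern_exponent_le n p δ t hp0 hp1 ht _ _ ?_ h0)
  have hn : (0:ℝ) ≤ (n:ℝ) := Nat.cast_nonneg n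
  rw [hts]
  nlinarith [sq_nonneg δ, mul_nonneg hn (sq_nonneg δ)]

lemma bern_lower_tail (n : ℕ) (p : ℝ) (hp0 : 0 ≤ p) (hp1 : p ≤ 1)
    (hp : ENNReal.ofReal p ≤ 1) (δ : ℝ) (hδ : 0 < δ) (hδ2 : δ ≤ 2) :
    (Measure.pi (fun _ : Fin n => (PMF.bernoulli (Real.toNNReal p) (ENNReal.coe_le_one_iff.mp hp)).toMeasure)
        {ω : Fin n → Bool | (successes ω : ℝ) ≤ (n : ℝ) * (p - δ)}).toReal
      ≤ Real.exp (-(n * δ ^ 2 / 4)) := by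
  set t := -(δ / 2) with hts
  have ht : |t| ≤ 1 := by
    rw [hts, abs_neg, abs_of_pos (by positivity)]; linarith
  have h0 : 0 ≤ 1 - p + p * Real.exp t := by nlinarith [Real.exp_pos t]
  have h := measure_le_le_exp_mul_mgf (μ := Measure.pi
      (fun _ : Fin n => (PMF.bernoulli (Real.toNNReal p) (ENNReal.coe_le_one_iff.mp hp)).toMeasure))
      (X := fun ω : Fin n → Bool => (successes ω : ℝ)) ((n : ℝ) * (p - δ))
      (t := t) (by rw [hts]; linarith) Integrable.of_finite
  rw [bern_pi_mgf_sum n p hp0 hp t] at h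
  refine h.trans (bern_exponent_le n p δ t hp0 hp1 ht _ _ ?_ h0)
  have hn : (0:ℝ) ≤ (n:ℝ) := Nat.cast_nonneg n
  rw [hts]
  nlinarith [sq_nonneg δ, mul_nonneg hn (sq_nonneg δ)]


theorem bernoulli_two_sided_tail_bound' (n : ℕ) (p : ℝ) (hp0 : 0 ≤ p) (hp1 : p ≤ 1)
    (δ : ℝ) (hδ : 0 < δ) :
    Measure.pi (fun _ : Fin n =>
        (PMF.bernoulli (Real.toNNReal p) (ENNReal.coe_le_one_iff.mp (ENNReal.ofReal_le_one.mpr hp1))).toMeasure)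
        {ω : Fin n → Bool | (n : ℝ) * δ ≤ |(successes ω : ℝ) - (n : ℝ) * p|}
      ≤ ENNReal.ofReal (2 * Real.exp (-(n * δ ^ 2 / 4))) := by
  set hp : ENNReal.ofReal p ≤ 1 := ENNReal.ofReal_le_one.mpr hp1
  set μ := Measure.pi (fun _ : Fin n => (PMF.bernoulli (Real.toNNReal p) (ENNReal.coe_le_one_iff.mp hp)).toMeasure) with hμ
  have hepos : 0 ≤ Real.exp (-(n * δ ^ 2 / 4)) := (Real.exp_pos _).le
  rcases Nat.eq_zero_or_pos n with hn | hn
  · subst hn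
    have hprob : IsProbabilityMeasure μ := inferInstance
    refine le_trans (prob_le_one) ?_
    simp only [Nat.cast_zero, zero_mul, zero_div, neg_zero, Real.exp_zero, mul_one]
    exact ENNReal.one_le_ofReal.mpr (by norm_num)
  by_cases hδ2 : δ ≤ 2
  · have hsub : {ω : Fin n → Bool | (n : ℝ) * δ ≤ |(successes ω : ℝ) - (n : ℝ) * p|}
        ⊆ {ω : Fin n → Bool | (n : ℝ) * (p + δ) ≤ (successes ω : ℝ)}
          ∪ {ω : Fin n → Bool | (successes ω : ℝ) ≤ (n : ℝ) * (p - δ)} := by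
      intro ω hω
      simp only [Set.mem_setOf_eq] at hω
      rcases le_abs.mp hω with h | h
      · left; simp only [Set.mem_setOf_eq]; nlinarith
      · right; simp only [Set.mem_setOf_eq]; nlinarith
    have hA : μ {ω : Fin n → Bool | (n : ℝ) * (p + δ) ≤ (successes ω : ℝ)}
        ≤ ENNReal.ofReal (Real.exp (-(n * δ ^ 2 / 4))) := by
      rw [← ENNReal.ofReal_toReal (measure_ne_top μ _)]
      exact ENNReal.ofReal_le_ofReal (bern_upper_tail n p hp0 hp1 hp δ hδ hδ2)
    have hB : μ {ω : Fin n → Bool | (successes ω : ℝ) ≤ (n : ℝ) * (p - δ)}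
        ≤ ENNReal.ofReal (Real.exp (-(n * δ ^ 2 / 4))) := by
      rw [← ENNReal.ofReal_toReal (measure_ne_top μ _)]
      exact ENNReal.ofReal_le_ofReal (bern_lower_tail n p hp0 hp1 hp δ hδ hδ2)
    calc μ {ω : Fin n → Bool | (n : ℝ) * δ ≤ |(successes ω : ℝ) - (n : ℝ) * p|}
        ≤ μ ({ω : Fin n → Bool | (n : ℝ) * (p + δ) ≤ (successes ω : ℝ)}
            ∪ {ω : Fin n → Bool | (successes ω : ℝ) ≤ (n : ℝ) * (p - δ)}) := measure_mono hsub
      _ ≤ _ + _ := measure_union_le _ _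
      _ ≤ ENNReal.ofReal (Real.exp (-(n * δ ^ 2 / 4)))
            + ENNReal.ofReal (Real.exp (-(n * δ ^ 2 / 4))) := add_le_add hA hB
      _ = ENNReal.ofReal (2 * Real.exp (-(n * δ ^ 2 / 4))) := by
          rw [← ENNReal.ofReal_add hepos hepos]; ring_nf
  · push_neg at hδ2
    have hnpos : (0:ℝ) < (n:ℝ) := by exact_mod_cast hn
    have hempty : {ω : Fin n → Bool | (n : ℝ) * δ ≤ |(successes ω : ℝ) - (n : ℝ) * p|} = ∅ := by
      rw [Set.eq_empty_iff_forall_notMem]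
      intro ω hω
      simp only [Set.mem_setOf_eq] at hω
      have h1 : (successes ω : ℝ) ≤ n := by
        have := Finset.card_filter_le Finset.univ (fun i : Fin n => ω i = true)
        simpa [successes, Finset.card_univ] using (Nat.cast_le (α := ℝ)).mpr this
      have h2 : (0:ℝ) ≤ (successes ω : ℝ) := Nat.cast_nonneg _
      have h3 : |(successes ω : ℝ) - (n : ℝ) * p| ≤ n := by
        rw [abs_le]; constructor <;> nlinarith
      nlinarith
    rw [hempty]
    simp

/-- Two-sided Chernoff-type bound (Theorem 3.3 of the paper):
`ℙ(|Sₙ − np| ≥ nδ) ≤ 2·exp(-nδ²/4)`. -/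
theorem bernoulli_two_sided_tail_bound (n : ℕ) (p : ℝ) (hp0 : 0 ≤ p) (hp1 : p ≤ 1)
    (δ : ℝ) (hδ : 0 < δ) :
    bernoulliPi n p (ENNReal.ofReal_le_one.mpr hp1)
        {ω : Fin n → Bool | (n : ℝ) * δ ≤ |(successes ω : ℝ) - (n : ℝ) * p|}
      ≤ ENNReal.ofReal (2 * Real.exp (-(n * δ ^ 2 / 4))) := by
  exact bernoulli_two_sided_tail_bound' n p hp0 hp1 δ hδ
end

section
/- A set X ⊆ 2^ω has strong measure zero if and only if for every meager set F ⊆ 2^ω, X + F ≠ 2^ω. -/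
open MeasureTheory Set Pointwise
open scoped ENNReal

/-- The Cantor space `2^ω = ℕ → ZMod 2`, with coordinatewise addition mod 2. -/
abbrev Cantor : Type := ℕ → ZMod 2

open Classical in
/-- The standard metric on the Cantor space: `d(x,y) = 2^{-min{n : x n ≠ y n}}`,
and `d(x,x) = 0`. -/
noncomputable def cdist (x y : Cantor) : ℝ :=
  if h : x = y then 0 else (2 : ℝ) ^ (-(Nat.find (Function.ne_iff.mp h) : ℤ))

/-- The diameter of a subset of the Cantor space with respect to `cdist`. -/
noncomputable def cdiam (s : Set Cantor) : ℝ := sSup (Set.image2 cdist s s)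

/-- `X ⊆ 2^ω` has strong measure zero if for every sequence `(εₙ)` of positive reals
there are sets `Xₙ` with `X = ⋃ₙ Xₙ` and `diam Xₙ < εₙ`. -/
def StrongMeasureZero (X : Set Cantor) : Prop :=
  ∀ ε : ℕ → ℝ, (∀ n, 0 < ε n) →
    ∃ Y : ℕ → Set Cantor, X = ⋃ n, Y n ∧ ∀ n, cdiam (Y n) < ε n

namespace GMS

lemma zmod2_cancel : ∀ a b : ZMod 2, a + (a + b) = b := by decide

lemma cantor_basis : TopologicalSpace.IsTopologicalBasis
    {s : Set Cantor | ∃ x n, s = PiNat.cylinder x n} :=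
  PiNat.isTopologicalBasis_cylinders (fun _ : ℕ => ZMod 2)

lemma cyl_isOpen (x : Cantor) (n : ℕ) : IsOpen (PiNat.cylinder x n) :=
  cantor_basis.isOpen ⟨x, n, rfl⟩

lemma nwd_union {s t : Set Cantor} (hs : IsClosed s) (hs' : IsNowhereDense s)
    (ht : IsClosed t) (ht' : IsNowhereDense t) :
    IsClosed (s ∪ t) ∧ IsNowhereDense (s ∪ t) := by
  have h1 := isClosed_isNowhereDense_iff_compl.mp ⟨hs, hs'⟩
  have h2 := isClosed_isNowhereDense_iff_compl.mp ⟨ht, ht'⟩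
  apply isClosed_isNowhereDense_iff_compl.mpr
  rw [Set.compl_union]
  exact ⟨h1.1.inter h2.1, h1.2.inter_of_isOpen_left h2.2 h1.1⟩

/-- From a meager set, an increasing sequence of closed nowhere dense sets covering it. -/
lemma meager_structure {F : Set Cantor} (hF : IsMeagre F) :
    ∃ C : ℕ → Set Cantor, (∀ m, IsClosed (C m)) ∧ (∀ m, IsNowhereDense (C m)) ∧
      (∀ m k, m ≤ k → C m ⊆ C k) ∧ F ⊆ ⋃ m, C m := by
  obtain ⟨S, hnwd, hcount, hcover⟩ := isMeagre_iff_countable_union_isNowhereDense.mp hF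
  rcases S.eq_empty_or_nonempty with rfl | hne
  · refine ⟨fun _ => ∅, fun _ => isClosed_empty, fun _ => isNowhereDense_empty,
      fun _ _ _ => le_refl _, ?_⟩
    simpa using hcover
  obtain ⟨D, rfl⟩ := hcount.exists_eq_range hne
  set C : ℕ → Set Cantor := fun m => Nat.rec (closure (D 0))
    (fun k ih => ih ∪ closure (D (k+1))) m with hC
  have hkey : ∀ m, IsClosed (C m) ∧ IsNowhereDense (C m) := by
    intro m
    induction m with
    | zero => exact ⟨isClosed_closure, (hnwd _ (Set.mem_range_self 0)).closure⟩
    | succ k ih =>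
        exact nwd_union ih.1 ih.2 isClosed_closure (hnwd _ (Set.mem_range_self (k+1))).closure
  have hmono : ∀ m k, m ≤ k → C m ⊆ C k := by
    intro m k
    induction k with
    | zero => intro hmk; rw [Nat.le_zero.mp hmk]
    | succ k ih =>
        intro hmk
        rcases Nat.eq_or_lt_of_le hmk with rfl | h
        · exact subset_rfl
        · exact (ih (Nat.lt_succ_iff.mp h)).trans Set.subset_union_left
  refine ⟨C, fun m => (hkey m).1, fun m => (hkey m).2, hmono, ?_⟩
  intro x hx
  obtain ⟨s, hs, hxs⟩ := hcover hx
  obtain ⟨i, rfl⟩ := hs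
  have h1 : D i ⊆ C i := by
    induction i with
    | zero => exact subset_closure
    | succ k _ => exact subset_closure.trans Set.subset_union_right
  exact Set.mem_iUnion.mpr ⟨i, h1 hxs⟩

/-- Avoidance: around any closed nwd set, every pattern of length `N` extends to a
cylinder of a uniform length `M` disjoint from the set. -/
lemma avoid {C : Set Cantor} (hcl : IsClosed C) (hnwd : IsNowhereDense C) (N : ℕ) :
    ∃ M : ℕ, N < M ∧ ∀ s : Cantor, ∃ t : Cantor,
      (∀ i < N, t i = s i) ∧ PiNat.cylinder t M ∩ C = ∅ := by
  have hdense : Dense Cᶜ := (isClosed_isNowhereDense_iff_compl.mp ⟨hcl, hnwd⟩).2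
  have hopen : IsOpen Cᶜ := (isClosed_isNowhereDense_iff_compl.mp ⟨hcl, hnwd⟩).1
  -- for each pattern u : Fin N → ZMod 2 pick a cylinder avoiding C
  have key : ∀ u : Fin N → ZMod 2, ∃ (y : Cantor) (m : ℕ),
      (∀ i : ℕ, ∀ h : i < N, y i = u ⟨i, h⟩) ∧ PiNat.cylinder y m ⊆ Cᶜ := by
    intro u
    set s : Cantor := fun i => if h : i < N then u ⟨i, h⟩ else 0 with hs
    obtain ⟨y, hyC, hy⟩ := hdense.exists_mem_open (cyl_isOpen s N)
      ⟨s, PiNat.self_mem_cylinder s N⟩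
    obtain ⟨o, ⟨z, m, rfl⟩, hyo, ho⟩ := cantor_basis.exists_subset_of_mem_open hyC hopen
    refine ⟨y, m, ?_, ?_⟩
    · intro i h
      have := (PiNat.mem_cylinder_iff.mp hy) i h
      simpa [hs, dif_pos h] using this
    · rw [(PiNat.mem_cylinder_iff_eq.mp hyo)]
      exact ho
  choose y m hy hm using key
  classical
  refine ⟨N + 1 + Finset.univ.sup m, by omega, ?_⟩
  intro s
  set u : Fin N → ZMod 2 := fun i => s i with hu
  refine ⟨y u, fun i h => hy u i h, ?_⟩
  rw [Set.eq_empty_iff_forall_notMem]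
  intro a ⟨ha1, ha2⟩
  have : a ∈ PiNat.cylinder (y u) (m u) :=
    PiNat.cylinder_anti _ (le_trans (Finset.le_sup (Finset.mem_univ u)) (by omega)) ha1
  exact hm u this ha2


lemma cdist_nonneg (x y : Cantor) : 0 ≤ cdist x y := by
  unfold cdist
  split
  · exact le_refl _
  · positivity

lemma cdist_le_one (x y : Cantor) : cdist x y ≤ 1 := by
  unfold cdist
  split
  · norm_num
  · apply zpow_le_one_of_nonpos₀ (by norm_num)
    simp

lemma bddAbove_image2_cdist (s : Set Cantor) : BddAbove (Set.image2 cdist s s) := by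
  refine ⟨1, fun r hr => ?_⟩
  obtain ⟨x, hx, y, hy, rfl⟩ := hr
  exact cdist_le_one x y

lemma cdist_le_cdiam {s : Set Cantor} {x y : Cantor} (hx : x ∈ s) (hy : y ∈ s) :
    cdist x y ≤ cdiam s :=
  le_csSup (bddAbove_image2_cdist s) (Set.mem_image2_of_mem hx hy)

lemma cdiam_le {s : Set Cantor} {n : ℕ} (h : ∀ x ∈ s, ∀ y ∈ s, ∀ i < n, x i = y i) :
    cdiam s ≤ (2:ℝ) ^ (-(n:ℤ)) := by
  apply Real.sSup_le
  · rintro r ⟨x, hx, y, hy, rfl⟩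
    unfold cdist
    split
    · positivity
    · rename_i hne
      apply zpow_le_zpow_right₀ (by norm_num)
      simp only [neg_le_neg_iff, Int.ofNat_le]
      by_contra hlt
      push_neg at hlt
      exact (Nat.find_spec (Function.ne_iff.mp hne)) (h x hx y hy _ hlt)
  · positivity

lemma agree_of_cdiam_lt {s : Set Cantor} {n : ℕ} (h : cdiam s < (2:ℝ) ^ (-(n:ℤ)))
    {x y : Cantor} (hx : x ∈ s) (hy : y ∈ s) : ∀ i < n, x i = y i := by
  intro i hi
  by_contra hne'
  have hne : x ≠ y := fun he => hne' (by rw [he])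
  have h1 : cdist x y = (2:ℝ) ^ (-(Nat.find (Function.ne_iff.mp hne) : ℤ)) := by
    unfold cdist; rw [dif_neg hne]
  have h2 : cdist x y < (2:ℝ) ^ (-(n:ℤ)) := lt_of_le_of_lt (cdist_le_cdiam hx hy) h
  rw [h1] at h2
  have h3 : n < Nat.find (Function.ne_iff.mp hne) := by
    by_contra hle
    push_neg at hle
    have := zpow_le_zpow_right₀ (by norm_num : (1:ℝ) ≤ 2)
      (by simpa using Int.ofNat_le.mpr hle : -(n:ℤ) ≤ -(Nat.find (Function.ne_iff.mp hne) : ℤ))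
    exact absurd h2 (not_lt.mpr this)
  have hfound : x i ≠ y i := hne'
  have := Nat.find_min (Function.ne_iff.mp hne) (lt_of_lt_of_le hi (Nat.le_of_lt_succ (Nat.lt_succ_of_lt h3)))
  exact this hfound

/-- Covering property with prescribed cylinder lengths. -/
def CovP (X : Set Cantor) (f : ℕ → ℕ) : Prop :=
  ∃ σ : ℕ → Cantor, X ⊆ ⋃ n, PiNat.cylinder (σ n) (f n)

lemma covP_mono {X : Set Cantor} {f g : ℕ → ℕ} (hfg : ∀ n, f n ≤ g n) (h : CovP X g) :
    CovP X f := by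
  obtain ⟨σ, hσ⟩ := h
  exact ⟨σ, hσ.trans (Set.iUnion_mono fun n => PiNat.cylinder_anti _ (hfg n))⟩

lemma smz_iff_covP (X : Set Cantor) : StrongMeasureZero X ↔ ∀ f : ℕ → ℕ, CovP X f := by
  constructor
  · intro hX f
    obtain ⟨Y, hY, hdiam⟩ := hX (fun n => (2:ℝ) ^ (-(f n : ℤ))) (fun n => by positivity)
    classical
    refine ⟨fun n => if h : (Y n).Nonempty then h.choose else (fun _ => 0), ?_⟩
    rw [hY]
    refine Set.iUnion_subset fun n x hx => Set.mem_iUnion.mpr ⟨n, ?_⟩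
    have hne : (Y n).Nonempty := ⟨x, hx⟩
    simp only [dif_pos hne, PiNat.mem_cylinder_iff]
    intro i hi
    exact agree_of_cdiam_lt (hdiam n) hx hne.choose_spec i hi
  · intro h ε hε
    have hf : ∀ n, ∃ k : ℕ, (2:ℝ) ^ (-(k:ℤ)) < ε n := by
      intro n
      obtain ⟨k, hk⟩ := exists_pow_lt_of_lt_one (hε n) (by norm_num : (1:ℝ)/2 < 1)
      refine ⟨k, ?_⟩
      calc (2:ℝ) ^ (-(k:ℤ)) = ((1:ℝ)/2) ^ k := by
            rw [zpow_neg, zpow_natCast, one_div, inv_pow]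
        _ < ε n := hk
    choose f hfspec using hf
    obtain ⟨σ, hσ⟩ := h f
    refine ⟨fun n => X ∩ PiNat.cylinder (σ n) (f n), ?_, ?_⟩
    · apply Set.Subset.antisymm
      · intro x hx
        obtain ⟨n, hn⟩ := Set.mem_iUnion.mp (hσ hx)
        exact Set.mem_iUnion.mpr ⟨n, hx, hn⟩
      · exact Set.iUnion_subset fun n => Set.inter_subset_left
    · intro n
      refine lt_of_le_of_lt (cdiam_le ?_) (hfspec n)
      intro x hx y hy i hi
      rw [hx.2 i hi, hy.2 i hi]


lemma zmod2_add_eq_zero : ∀ a b : ZMod 2, a + b = 0 ↔ a = b := by decide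

lemma forward {X : Set Cantor} (hX : ∀ f : ℕ → ℕ, CovP X f)
    {F : Set Cantor} (hF : IsMeagre F) : X + F ≠ Set.univ := by
  obtain ⟨C, hcl, hnwd, hmono, hcover⟩ := meager_structure hF
  have havoid : ∀ k N, ∃ M, N < M ∧ ∀ s : Cantor, ∃ t,
      (∀ i < N, t i = s i) ∧ PiNat.cylinder t M ∩ C k = ∅ :=
    fun k N => avoid (hcl k) (hnwd k) N
  choose g hg1 hg2 using havoid
  set n : ℕ → ℕ := fun k => Nat.rec 0 (fun k ih => g k ih) k with hn
  have hnlt : ∀ k, n k < n (k+1) := fun k => hg1 k (n k)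
  have hnmono : StrictMono n := strictMono_nat_of_lt_succ hnlt
  have hcov : ∀ i, ∃ σ : ℕ → Cantor, X ⊆ ⋃ j, PiNat.cylinder (σ j) (n (Nat.pair i j + 1)) :=
    fun i => hX (fun j => n (Nat.pair i j + 1))
  choose σ hσ using hcov
  set τ : ℕ → Cantor := fun k => σ (Nat.unpair k).1 (Nat.unpair k).2 with hτ
  have hτk : ∀ i j, τ (Nat.pair i j) = σ i j := by
    intro i j; simp [hτ, Nat.unpair_pair]
  have hT : ∀ k (w : Cantor), ∃ t : Cantor, (∀ i < n k, t i = (τ k + w) i) ∧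
      PiNat.cylinder t (n (k+1)) ∩ C k = ∅ := fun k w => hg2 k (n k) (τ k + w)
  choose T hT1 hT2 using hT
  set Z : ℕ → Cantor := fun k => Nat.rec (fun _ => 0) (fun k ih => τ k + T k ih) k with hZ
  have hZsucc : ∀ k, Z (k+1) = τ k + T k (Z k) := fun _ => rfl
  have hstab : ∀ m k, k ≤ m → ∀ i, i < n k → Z m i = Z k i := by
    intro m
    induction m with
    | zero => intro k hk i _; rw [Nat.le_zero.mp hk]
    | succ m ih =>
        intro k hk i hi
        rcases Nat.eq_or_lt_of_le hk with rfl | h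
        · rfl
        · have hkm : k ≤ m := Nat.lt_succ_iff.mp h
          have him : i < n m := lt_of_lt_of_le hi (hnmono.monotone hkm)
          have h1 : Z (m+1) i = τ m i + T m (Z m) i := rfl
          rw [h1, hT1 m (Z m) i him]
          show τ m i + (τ m i + Z m i) = Z k i
          rw [zmod2_cancel]
          exact ih k hkm i hi
  set z : Cantor := fun i => Z (i+1) i with hz
  have hzkey : ∀ k, ∀ i, i < n (k+1) → z i = Z (k+1) i := by
    intro k i hi
    rcases le_total (i+1) (k+1) with h | h
    · exact (hstab (k+1) (i+1) h i
        (lt_of_lt_of_le (Nat.lt_succ_self i) hnmono.le_apply)).symm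
    · show Z (i+1) i = Z (k+1) i
      exact hstab (i+1) (k+1) h i hi
  have hmain : ∀ x ∈ X, ∀ m, x + z ∉ C m := by
    intro x hx m
    obtain ⟨j, hj⟩ := Set.mem_iUnion.mp (hσ m hx)
    set k := Nat.pair m j with hk
    have hxcyl : x ∈ PiNat.cylinder (τ k) (n (k+1)) := by
      rw [hk, hτk]; exact hj
    have hxz : x + z ∈ PiNat.cylinder (T k (Z k)) (n (k+1)) := by
      apply PiNat.mem_cylinder_iff.mpr
      intro i hi
      have h1 : x i = τ k i := PiNat.mem_cylinder_iff.mp hxcyl i hi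
      show x i + z i = T k (Z k) i
      rw [hzkey k i hi, h1]
      show τ k i + (τ k + T k (Z k)) i = T k (Z k) i
      exact zmod2_cancel _ _
    intro hmem
    have hck : x + z ∈ C k := hmono m k (Nat.left_le_pair m j) hmem
    have hemp := hT2 k (Z k)
    rw [Set.eq_empty_iff_forall_notMem] at hemp
    exact hemp (x+z) ⟨hxz, hck⟩
  intro heq
  have hz' : z ∈ X + F := heq ▸ Set.mem_univ z
  obtain ⟨x, hx, y, hy, hxy⟩ := Set.mem_add.mp hz'
  obtain ⟨m, hm⟩ := Set.mem_iUnion.mp (hcover hy)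
  have hyz : y = x + z := by
    funext i
    show y i = x i + z i
    rw [← hxy]
    exact (zmod2_cancel (x i) (y i)).symm
  exact hmain x hx m (hyz ▸ hm)

lemma block_unique {c : ℕ → ℕ} (hc : StrictMono c) {n₁ n₂ m : ℕ}
    (h1 : c n₁ ≤ m) (h2 : m < c (n₁+1)) (h3 : c n₂ ≤ m) (h4 : m < c (n₂+1)) : n₁ = n₂ := by
  rcases lt_trichotomy n₁ n₂ with h | h | h
  · exact absurd (le_trans (hc.monotone (Nat.succ_le_of_lt h)) h3) (not_le.mpr h2)
  · exact h
  · exact absurd (le_trans (hc.monotone (Nat.succ_le_of_lt h)) h1) (not_le.mpr h4)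

lemma backward {X : Set Cantor}
    (h : ∀ F : Set Cantor, IsMeagre F → X + F ≠ Set.univ) (f : ℕ → ℕ) : CovP X f := by
  classical
  -- replace f by a strictly monotone majorant
  set f' : ℕ → ℕ := fun m => (Finset.range (m+1)).sup f + m + 1 with hf'
  have hle : ∀ m, f m ≤ f' m := fun m =>
    le_trans (Finset.le_sup (Finset.self_mem_range_succ m))
      (show (Finset.range (m+1)).sup f ≤ (Finset.range (m+1)).sup f + m + 1 by omega)
  have hf'mono : StrictMono f' := by
    apply strictMono_nat_of_lt_succ
    intro m
    have h2 : (Finset.range (m+1)).sup f ≤ (Finset.range (m+2)).sup f :=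
      Finset.sup_mono (Finset.range_subset_range.mpr (by omega))
    show (Finset.range (m+1)).sup f + m + 1 < (Finset.range (m+2)).sup f + (m+1) + 1
    omega
  have hf'ge : ∀ m, m + 1 ≤ f' m := fun m => by simp [hf']
  apply covP_mono hle
  -- blocks
  set c : ℕ → ℕ := fun n => Nat.rec 0 (fun _ ih => ih + 2 ^ (f' ih)) n with hcdef
  have hcsucc : ∀ n, c (n+1) = c n + 2 ^ (f' (c n)) := fun _ => rfl
  set a : ℕ → ℕ := fun n => f' (c n) with ha
  have hclt : ∀ n, c n < c (n+1) := fun n => by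
    rw [hcsucc]; have := Nat.one_le_two_pow (n := f' (c n)); omega
  have hcmono : StrictMono c := strictMono_nat_of_lt_succ hclt
  have hc0 : c 0 = 0 := rfl
  have hamono : StrictMono a := fun _ _ hmn => hf'mono (hcmono hmn)
  have hage : ∀ n, n + 1 ≤ a n := fun n =>
    le_trans (by have := hcmono.le_apply (x := n); omega) (hf'ge (c n))
  -- the meager set
  set F : Set Cantor := {u | ∀ n, ∃ i, a n ≤ i ∧ i < a (n+1) ∧ u i ≠ 0} with hF
  have hFclosed : IsClosed F := by
    have : F = ⋂ n, (⋂ i ∈ Finset.Ico (a n) (a (n+1)), {u : Cantor | u i = 0})ᶜ := by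
      ext u
      simp only [hF, Set.mem_setOf_eq, Set.mem_iInter, Set.mem_compl_iff, Finset.mem_Ico,
        not_forall]
      constructor
      · intro hu n
        obtain ⟨i, h1, h2, h3⟩ := hu n
        exact ⟨i, ⟨h1, h2⟩, h3⟩
      · intro hu n
        obtain ⟨i, ⟨h1, h2⟩, h3⟩ := hu n
        exact ⟨i, h1, h2, h3⟩
    rw [this]
    exact isClosed_iInter fun n => (isOpen_biInter_finset fun i _ =>
      IsOpen.preimage (continuous_apply i) (isOpen_discrete {(0 : ZMod 2)})).isClosed_compl
  have hFdense : Dense Fᶜ := by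
    rw [cantor_basis.dense_iff]
    rintro o ⟨v, N, rfl⟩ -
    refine ⟨fun i => if i < N then v i else 0, ?_, ?_⟩
    · intro i hi; simp [hi]
    · intro hmem
      obtain ⟨i, h1, h2, h3⟩ := hmem N
      have : ¬ i < N := by have := hage N; omega
      simp [this] at h3
  have hFmeagre : IsMeagre F := by
    rw [isMeagre_iff_countable_union_isNowhereDense]
    refine ⟨{F}, ?_, Set.countable_singleton F, fun u hu => ⟨F, rfl, hu⟩⟩
    rintro t rfl
    rw [hFclosed.isNowhereDense_iff, interior_eq_empty_iff_dense_compl]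
    exact hFdense
  obtain ⟨w, hw⟩ := (Set.ne_univ_iff_exists_notMem _).mp (h F hFmeagre)
  -- every x ∈ X agrees with w on some block
  have hagree : ∀ x ∈ X, ∃ n, ∀ i, a n ≤ i → i < a (n+1) → x i = w i := by
    intro x hx
    have hxwF : x + w ∉ F := by
      intro hmem
      apply hw
      refine Set.mem_add.mpr ⟨x, hx, x + w, hmem, ?_⟩
      funext i
      exact zmod2_cancel (x i) (w i)
    simp only [hF, Set.mem_setOf_eq, not_forall] at hxwF
    obtain ⟨n, hn⟩ := hxwF
    push_neg at hn
    refine ⟨n, fun i h1 h2 => ?_⟩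
    exact (zmod2_add_eq_zero (x i) (w i)).mp (hn i h1 h2)
  -- finite pattern sets
  set S : ℕ → Finset Cantor := fun n =>
    Finset.image (fun v : Fin (a n) → ZMod 2 =>
      (fun i => if hi : i < a n then v ⟨i, hi⟩ else w i : Cantor)) Finset.univ with hS
  have hScard : ∀ n, (S n).card ≤ 2 ^ (a n) := by
    intro n
    calc (S n).card ≤ (Finset.univ : Finset (Fin (a n) → ZMod 2)).card :=
          Finset.card_image_le
      _ = 2 ^ (a n) := by
          rw [Finset.card_univ, Fintype.card_fun, ZMod.card, Fintype.card_fin]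
  have hcatch : ∀ x ∈ X, ∃ n, ∃ g ∈ S n, x ∈ PiNat.cylinder g (a (n+1)) := by
    intro x hx
    obtain ⟨n, hn⟩ := hagree x hx
    refine ⟨n, (fun i => if hi : i < a n then x i else w i : Cantor), ?_, ?_⟩
    · exact Finset.mem_image.mpr ⟨fun j : Fin (a n) => x j, Finset.mem_univ _, rfl⟩
    · apply PiNat.mem_cylinder_iff.mpr
      intro i hi
      by_cases hia : i < a n
      · simp [hia]
      · rw [dif_neg hia]
        exact hn i (not_lt.mp hia) hi
  -- the block index function
  set ρ : ℕ → ℕ := fun m => Nat.findGreatest (fun n => c n ≤ m) m with hρ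
  have hρ1 : ∀ m, c (ρ m) ≤ m := by
    intro m
    exact Nat.findGreatest_spec (P := fun n => c n ≤ m) (Nat.zero_le m)
      (show c 0 ≤ m by rw [hc0]; omega)
  have hρ2 : ∀ m, m < c (ρ m + 1) := by
    intro m
    by_cases hcase : ρ m + 1 ≤ m
    · by_contra hcon
      push_neg at hcon
      exact Nat.findGreatest_is_greatest (P := fun n => c n ≤ m) (Nat.lt_succ_self _) hcase hcon
    · push_neg at hcase
      have h1 : m ≤ ρ m := Nat.lt_succ_iff.mp hcase
      have h2 : ρ m + 1 ≤ c (ρ m + 1) := hcmono.le_apply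
      omega
  -- assemble σ
  set σ : ℕ → Cantor := fun m => (S (ρ m)).toList.getD (m - c (ρ m)) (fun _ => 0) with hσ
  refine ⟨σ, fun x hx => ?_⟩
  obtain ⟨n, g, hgS, hgcyl⟩ := hcatch x hx
  obtain ⟨idx, hidx, hget⟩ := List.mem_iff_getElem.mp (Finset.mem_toList.mpr hgS)
  have hlen : (S n).toList.length = (S n).card := Finset.length_toList _
  set m : ℕ := c n + idx with hm
  have hmlt : m < c (n+1) := by
    rw [hcsucc]
    have : idx < 2 ^ (a n) := by
      rw [hlen] at hidx
      exact lt_of_lt_of_le hidx (hScard n)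
    simp only [ha] at this ⊢
    omega
  have hρm : ρ m = n := block_unique hcmono (hρ1 m) (hρ2 m) (by omega) hmlt
  have hσm : σ m = g := by
    rw [hσ]
    simp only [hρm]
    simp only [hm, Nat.add_sub_cancel_left]
    rw [List.getD_eq_getElem _ _ (by omega)]
    exact hget
  refine Set.mem_iUnion.mpr ⟨m, ?_⟩
  rw [hσm]
  have hfm : f' m ≤ a (n+1) := by
    have : m ≤ c (n+1) := le_of_lt hmlt
    exact hf'mono.monotone this
  exact PiNat.cylinder_anti _ hfm hgcyl

end GMS

/-- (Galvin–Mycielski–Solovay) `X` has strong measure zero iff `X + F ≠ 2^ω` for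
every meager set `F`. -/
theorem strongMeasureZero_iff_add_meager_ne_univ (X : Set Cantor) :
    StrongMeasureZero X ↔ ∀ F : Set Cantor, IsMeagre F → X + F ≠ Set.univ := by
  rw [GMS.smz_iff_covP]
  constructor
  · intro h F hF
    exact GMS.forward h hF
  · intro h f
    exact GMS.backward h f
end
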